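/- arXiv:1504.04429 — 5 statements merged into one kernel-verified Lean document; each statement's English description precedes it below -/
import Mathlib

section
/- For any POVM (π_y) on ℂ^d, the informational power satisfies W(π) = sup_ρ A((ρ^{1/2} π_y ρ^{1/2})_y), where the supremum is over all density matrices ρ (positive semidefinite d×d complex matrices of trace 1); note that for any density matrix ρ, the family (ρ^{1/2} π_y ρ^{1/2})_y is an ensemble. -/
open MeasureTheory Matrix Finset Filter
open scoped ComplexOrder

noncomputable section

/-- The `k`-fold Kronecker tensor power of a `d × d` matrix, acting on `(ℂ^d)^{⊗k}`
(indexed by functions `Fin k → Fin d`). -/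
def matTensorPow {d : ℕ} (M : Matrix (Fin d) (Fin d) ℂ) (k : ℕ) :
    Matrix (Fin k → Fin d) (Fin k → Fin d) ℂ :=
  Matrix.of fun f g => ∏ i, M (f i) (g i)

/-- The orthogonal projection onto the symmetric subspace of `(ℂ^d)^{⊗k}`,
written as the average of the permutation operators. -/
def symProj (k d : ℕ) : Matrix (Fin k → Fin d) (Fin k → Fin d) ℂ :=
  ((Nat.factorial k : ℂ))⁻¹ •
    ∑ σ : Equiv.Perm (Fin k),
      Matrix.of fun f g => if (∀ i, f (σ i) = g i) then (1 : ℂ) else 0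

/-- A (finite) POVM on `ℂ^d`: positive semidefinite effects summing to the identity. -/
def IsPOVM {d m : ℕ} (π : Fin m → Matrix (Fin d) (Fin d) ℂ) : Prop :=
  (∀ y, (π y).PosSemidef) ∧ ∑ y, π y = 1

/-- A spherical quantum `t`-design POVM on `ℂ^d`. -/
def IsTDesignPOVM {d m : ℕ} (t : ℕ) (π : Fin m → Matrix (Fin d) (Fin d) ℂ) : Prop :=
  IsPOVM π ∧ (∀ y, π y ≠ 0) ∧
    ∀ k, 1 ≤ k → k ≤ t →
      ((d : ℂ))⁻¹ • ∑ y, (((π y).trace) ^ (k - 1))⁻¹ • matTensorPow (π y) k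
        = ((Nat.choose (d - 1 + k) k : ℂ))⁻¹ • symProj k d

/-- A (finite) ensemble on `ℂ^d`: positive semidefinite matrices with unit total trace. -/
def IsEnsemble {d n : ℕ} (ρ : Fin n → Matrix (Fin d) (Fin d) ℂ) : Prop :=
  (∀ x, (ρ x).PosSemidef) ∧ ∑ x, (ρ x).trace = 1

/-- The mutual information (in nats) of the joint distribution
`p_{x,y} = Tr(ρ_x π_y)`; terms with `p_{x,y} = 0` vanish. -/
def mutualInfo {d n m : ℕ} (ρ : Fin n → Matrix (Fin d) (Fin d) ℂ)
    (π : Fin m → Matrix (Fin d) (Fin d) ℂ) : ℝ :=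
  ∑ x, ∑ y,
    ((ρ x * π y).trace).re *
      Real.log (((ρ x * π y).trace).re /
        (((ρ x).trace).re * ∑ x', ((ρ x' * π y).trace).re))

/-- The informational power of a POVM: the supremum of the mutual information
over all (finite) ensembles. -/
def infoPower {d m : ℕ} (π : Fin m → Matrix (Fin d) (Fin d) ℂ) : ℝ :=
  sSup {w | ∃ (n : ℕ) (ρ : Fin n → Matrix (Fin d) (Fin d) ℂ),
    IsEnsemble ρ ∧ w = mutualInfo ρ π}

/-- The accessible information of an ensemble: the supremum of the mutual
information over all (finite) POVMs. -/
def accInfo {d n : ℕ} (ρ : Fin n → Matrix (Fin d) (Fin d) ℂ) : ℝ :=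
  sSup {w | ∃ (m : ℕ) (π : Fin m → Matrix (Fin d) (Fin d) ℂ),
    IsPOVM π ∧ w = mutualInfo ρ π}

/-- `η(u) = -u ln u` (with `η(0) = 0`). -/
def etaFn (u : ℝ) : ℝ := -u * Real.log u
/-- The positive semidefinite square root of a positive semidefinite matrix, with the
definition `Matrix.PosSemidef.sqrt` had in the older Mathlib (since removed). -/
def Matrix.PosSemidef.sqrt {n 𝕜 : Type*} [Fintype n] [DecidableEq n] [RCLike 𝕜]
    {A : Matrix n n 𝕜} (hA : A.PosSemidef) : Matrix n n 𝕜 :=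
  hA.1.eigenvectorUnitary.1 * diagonal ((↑) ∘ (Real.sqrt ∘ hA.1.eigenvalues)) *
    (star hA.1.eigenvectorUnitary : Matrix n n 𝕜)

lemma Matrix.PosSemidef.posSemidef_sqrt {n 𝕜 : Type*} [Fintype n] [DecidableEq n] [RCLike 𝕜]
    {A : Matrix n n 𝕜} (hA : A.PosSemidef) : hA.sqrt.PosSemidef := by
  unfold Matrix.PosSemidef.sqrt
  have h1 : (diagonal ((↑) ∘ (Real.sqrt ∘ hA.1.eigenvalues)) : Matrix n n 𝕜).PosSemidef :=
    posSemidef_diagonal_iff.mpr fun i => by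
      simp only [Function.comp_apply]; exact RCLike.ofReal_nonneg.mpr (Real.sqrt_nonneg _)
  have h2 := h1.conjTranspose_mul_mul_same (star (hA.1.eigenvectorUnitary : Matrix n n 𝕜))
  simp only [Matrix.star_eq_conjTranspose, Matrix.conjTranspose_conjTranspose,
    Unitary.coe_star] at h2 ⊢
  exact h2

lemma Matrix.PosSemidef.sqrt_mul_self {n 𝕜 : Type*} [Fintype n] [DecidableEq n] [RCLike 𝕜]
    {A : Matrix n n 𝕜} (hA : A.PosSemidef) : hA.sqrt * hA.sqrt = A := by
  unfold Matrix.PosSemidef.sqrt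
  have hU : star (hA.1.eigenvectorUnitary : Matrix n n 𝕜) * (hA.1.eigenvectorUnitary : Matrix n n 𝕜) = 1 :=
    Matrix.mem_unitaryGroup_iff'.mp hA.1.eigenvectorUnitary.2
  conv_rhs => rw [hA.1.spectral_theorem, Unitary.conjStarAlgAut_apply]
  simp only [Unitary.coe_star, Matrix.mul_assoc]
  rw [← Matrix.mul_assoc (star _) _, hU, Matrix.one_mul, ← Matrix.mul_assoc (diagonal _),
    Matrix.diagonal_mul_diagonal]
  congr 3
  funext i
  simp only [Function.comp_apply]
  rw [← RCLike.ofReal_mul, Real.mul_self_sqrt (hA.eigenvalues_nonneg i)]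
section AuxLemmas

lemma psd_trace_nonneg {d : ℕ} {A : Matrix (Fin d) (Fin d) ℂ} (hA : A.PosSemidef) :
    0 ≤ A.trace := by
  rw [Matrix.trace]
  refine Finset.sum_nonneg fun i _ => ?_
  exact hA.diag_nonneg

lemma psd_trace_mul_nonneg {d : ℕ} {A B : Matrix (Fin d) (Fin d) ℂ}
    (hA : A.PosSemidef) (hB : B.PosSemidef) : 0 ≤ (A * B).trace := by
  have h : A * B = A * hB.sqrt * hB.sqrt := by rw [mul_assoc, hB.sqrt_mul_self]
  rw [h, Matrix.trace_mul_cycle]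
  have h2 : hB.sqrt * A * hB.sqrt = hB.sqrt.conjTranspose * A * hB.sqrt := by
    rw [hB.posSemidef_sqrt.1.eq]
  rw [h2]
  exact psd_trace_nonneg (hA.conjTranspose_mul_mul_same hB.sqrt)

lemma trace_mul_re_nonneg {d : ℕ} {A B : Matrix (Fin d) (Fin d) ℂ}
    (hA : A.PosSemidef) (hB : B.PosSemidef) : 0 ≤ ((A * B).trace).re :=
  (Complex.nonneg_iff.mp (psd_trace_mul_nonneg hA hB)).1

lemma psd_trace_eq_zero {d : ℕ} {A : Matrix (Fin d) (Fin d) ℂ} (hA : A.PosSemidef)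
    (h : A.trace = 0) : A = 0 := by
  have hs : A = hA.sqrtᴴ * hA.sqrt := by
    rw [hA.posSemidef_sqrt.1.eq, hA.sqrt_mul_self]
  have hdiag : ∀ i, (hA.sqrtᴴ * hA.sqrt) i i = ∑ j, (Complex.normSq (hA.sqrt j i) : ℂ) := by
    intro i
    simp [Matrix.mul_apply, Matrix.conjTranspose_apply, Complex.normSq_eq_conj_mul_self]
  have h2 : ∑ i, ∑ j, Complex.normSq (hA.sqrt j i) = 0 := by
    have := congrArg Complex.re h
    rw [hs, Matrix.trace] at this
    simp only [Matrix.diag_apply, hdiag] at this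
    simpa using this
  have h3 := (Finset.sum_eq_zero_iff_of_nonneg (fun i (_ : i ∈ Finset.univ) =>
    Finset.sum_nonneg fun j _ => Complex.normSq_nonneg (hA.sqrt j i))).mp h2
  have hC : hA.sqrt = 0 := by
    ext j i
    have := (Finset.sum_eq_zero_iff_of_nonneg (fun j (_ : j ∈ Finset.univ) =>
      Complex.normSq_nonneg (hA.sqrt j i))).mp (h3 i (Finset.mem_univ i)) j (Finset.mem_univ j)
    simpa using Complex.normSq_eq_zero.mp this
  rw [hs, hC]
  simp

lemma posSemidef_sum {d k : ℕ} (s : Finset (Fin k)) (f : Fin k → Matrix (Fin d) (Fin d) ℂ)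
    (h : ∀ i ∈ s, (f i).PosSemidef) : (∑ i ∈ s, f i).PosSemidef := by
  classical
  induction s using Finset.induction_on with
  | empty => simpa using Matrix.PosSemidef.zero
  | insert _ _ hx ih =>
    rw [Finset.sum_insert hx]
    exact Matrix.PosSemidef.add (h _ (Finset.mem_insert_self _ _))
      (ih fun i hi => h i (Finset.mem_insert_of_mem hi))

lemma exists_pinv {d : ℕ} {T : Matrix (Fin d) (Fin d) ℂ} (hT : T.PosSemidef) :
    ∃ S P : Matrix (Fin d) (Fin d) ℂ, S.PosSemidef ∧ P.PosSemidef ∧ (1 - P).PosSemidef ∧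
      T * S = P ∧ S * T = P ∧ P * P = P ∧ P * T = T ∧ T * P = T := by
  have hH : T.IsHermitian := hT.1
  set V : Matrix (Fin d) (Fin d) ℂ := (hH.eigenvectorUnitary : Matrix (Fin d) (Fin d) ℂ) with hV
  have hVs : star V * V = 1 := Matrix.mem_unitaryGroup_iff'.mp hH.eigenvectorUnitary.2
  have hVs2 : V * star V = 1 := Matrix.mem_unitaryGroup_iff.mp hH.eigenvectorUnitary.2
  set lam : Fin d → ℝ := hH.eigenvalues with hlam
  have hmul : ∀ a b : Fin d → ℂ, (V * diagonal a * star V) * (V * diagonal b * star V)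
      = V * diagonal (fun i => a i * b i) * star V := by
    intro a b
    simp only [Matrix.mul_assoc]
    rw [← Matrix.mul_assoc (star V) V, hVs, Matrix.one_mul,
      ← Matrix.mul_assoc (diagonal a), Matrix.diagonal_mul_diagonal]
  have hdiag : ∀ a b : Fin d → ℂ, (∀ i, a i = b i) →
      V * diagonal a * star V = V * diagonal b * star V := by
    intro a b h
    rw [show a = b from funext h]
  have hpsd : ∀ a : Fin d → ℝ, (∀ i, 0 ≤ a i) →
      (V * diagonal (fun i => (a i : ℂ)) * star V).PosSemidef := by
    intro a ha
    have h1 : (diagonal (fun i => (a i : ℂ))).PosSemidef :=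
      posSemidef_diagonal_iff.mpr fun i => by
        rw [Complex.nonneg_iff]; simpa using ha i
    have h2 := h1.conjTranspose_mul_mul_same (star V)
    simpa only [Matrix.star_eq_conjTranspose, Matrix.conjTranspose_conjTranspose] using h2
  have hspec : T = V * diagonal (fun i => (lam i : ℂ)) * star V := by
    have h := hH.spectral_theorem
    rw [Unitary.conjStarAlgAut_apply] at h
    rw [h]; rfl
  have hproj : ∀ i, lam i * (lam i)⁻¹ = if lam i = 0 then 0 else 1 := by
    intro i
    rcases eq_or_ne (lam i) 0 with h | h
    · simp [h]
    · simp [mul_inv_cancel₀ h, h]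
  refine ⟨V * diagonal (fun i => (((lam i)⁻¹ : ℝ) : ℂ)) * star V,
    V * diagonal (fun i => ((lam i * (lam i)⁻¹ : ℝ) : ℂ)) * star V,
    ?_, ?_, ?_, ?_, ?_, ?_, ?_, ?_⟩
  · exact hpsd (fun i => (lam i)⁻¹) fun i => inv_nonneg.mpr (hT.eigenvalues_nonneg i)
  · refine hpsd _ fun i => ?_
    rw [hproj]; split <;> norm_num
  · have h1P : (1 : Matrix (Fin d) (Fin d) ℂ) -
        V * diagonal (fun i => ((lam i * (lam i)⁻¹ : ℝ) : ℂ)) * star V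
        = V * diagonal (fun i => ((1 - lam i * (lam i)⁻¹ : ℝ) : ℂ)) * star V := by
      have hone : V * diagonal (fun _ : Fin d => (1:ℂ)) * star V = 1 := by
        simpa using hVs2
      nth_rewrite 1 [← hone]
      rw [← Matrix.sub_mul, ← Matrix.mul_sub, Matrix.diagonal_sub]
      exact hdiag _ _ fun i => by push_cast; ring
    rw [h1P]
    refine hpsd _ fun i => ?_
    rw [hproj]; split <;> norm_num
  · rw [hspec, hmul]
    exact hdiag _ _ fun i => by push_cast; ring
  · rw [hspec, hmul]
    exact hdiag _ _ fun i => by push_cast; ring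
  · rw [hmul]
    refine hdiag _ _ fun i => ?_
    rw [← Complex.ofReal_mul]
    congr 1
    rw [hproj]; split <;> norm_num
  · rw [hspec, hmul]
    refine hdiag _ _ fun i => ?_
    rw [← Complex.ofReal_mul]
    congr 1
    rcases eq_or_ne (lam i) 0 with h | h
    · simp [h]
    · field_simp
  · rw [hspec, hmul]
    refine hdiag _ _ fun i => ?_
    rw [← Complex.ofReal_mul]
    congr 1
    rcases eq_or_ne (lam i) 0 with h | h
    · simp [h]
    · field_simp

lemma proj_conj {d : ℕ} {A T P : Matrix (Fin d) (Fin d) ℂ} (hA : A.PosSemidef)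
    (h1P : (1 - P).PosSemidef) (hD : (T * T - A).PosSemidef) (hTh : T.IsHermitian)
    (hTP : T * P = T) : P * A * P = A := by
  obtain ⟨Q, hQ⟩ : ∃ Q : Matrix (Fin d) (Fin d) ℂ, Q = 1 - P := ⟨_, rfl⟩
  rw [← hQ] at h1P
  have hP : P = 1 - Q := by rw [hQ, sub_sub_cancel]
  have hQH : Q.IsHermitian := h1P.1
  have hTQ : T * Q = 0 := by
    rw [hQ, Matrix.mul_sub, Matrix.mul_one, hTP, sub_self]
  have hQT : Q * T = 0 := by
    have := congrArg Matrix.conjTranspose hTQ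
    rwa [Matrix.conjTranspose_mul, hQH.eq, hTh.eq, Matrix.conjTranspose_zero] at this
  have h1 : (Q * A * Q).PosSemidef := by
    have := hA.conjTranspose_mul_mul_same Q
    rwa [hQH.eq] at this
  have h2 : (Q * (T * T - A) * Q).PosSemidef := by
    have := hD.conjTranspose_mul_mul_same Q
    rwa [hQH.eq] at this
  have hQTTQ : Q * (T * T) * Q = 0 := by
    rw [show Q * (T * T) * Q = (Q * T) * (T * Q) by simp only [Matrix.mul_assoc], hQT,
      Matrix.zero_mul]
  have hsum : Q * A * Q + Q * (T * T - A) * Q = 0 := by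
    rw [Matrix.mul_sub, Matrix.sub_mul, hQTTQ]
    abel
  have htr0 : (Q * A * Q).trace = 0 := by
    have e : (Q * A * Q).trace + (Q * (T * T - A) * Q).trace = 0 := by
      rw [← Matrix.trace_add, hsum, Matrix.trace_zero]
    have n1 := psd_trace_nonneg h1
    have n2 := psd_trace_nonneg h2
    have hle : (Q * A * Q).trace ≤ 0 := by
      rw [show (0:ℂ) = (Q * A * Q).trace + (Q * (T * T - A) * Q).trace from e.symm]
      simpa using n2
    exact le_antisymm hle n1
  have hQAQ : Q * A * Q = 0 := psd_trace_eq_zero h1 htr0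
  have hCQ : hA.sqrt * Q = 0 := by
    have hCH : hA.sqrt.IsHermitian := hA.posSemidef_sqrt.1
    have e : (hA.sqrt * Q)ᴴ * (hA.sqrt * Q) = Q * A * Q := by
      rw [Matrix.conjTranspose_mul, hCH.eq, hQH.eq]
      rw [show Q * hA.sqrt * (hA.sqrt * Q) = Q * (hA.sqrt * hA.sqrt) * Q by
        simp only [Matrix.mul_assoc], hA.sqrt_mul_self]
    exact Matrix.conjTranspose_mul_self_eq_zero.mp (e.trans hQAQ)
  have hAQ : A * Q = 0 := by
    rw [← hA.sqrt_mul_self, Matrix.mul_assoc, hCQ, Matrix.mul_zero]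
  have hQA : Q * A = 0 := by
    have := congrArg Matrix.conjTranspose hAQ
    rwa [Matrix.conjTranspose_mul, hA.1.eq, hQH.eq, Matrix.conjTranspose_zero] at this
  rw [hP, Matrix.sub_mul, Matrix.one_mul, hQA, sub_zero, Matrix.mul_sub, Matrix.mul_one,
    hAQ, sub_zero]

end AuxLemmas

section MIjointLemmas

def MIjoint {n m : ℕ} (p : Fin n → Fin m → ℝ) : ℝ :=
  ∑ x, ∑ y, p x y * Real.log (p x y / ((∑ y', p x y') * (∑ x', p x' y)))

lemma MIjoint_comm {n m : ℕ} (p : Fin n → Fin m → ℝ) :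
    MIjoint p = MIjoint (fun y x => p x y) := by
  rw [MIjoint, MIjoint, Finset.sum_comm]
  exact Finset.sum_congr rfl fun y _ => Finset.sum_congr rfl fun x _ => by
    rw [mul_comm (∑ y', p x y')]

lemma MIjoint_le {n m : ℕ} (p : Fin n → Fin m → ℝ)
    (hp : ∀ x y, 0 ≤ p x y) (htot : ∑ x, ∑ y, p x y = 1) :
    MIjoint p ≤ m := by
  rw [MIjoint, Finset.sum_comm]
  have key : ∀ y : Fin m,
      ∑ x, p x y * Real.log (p x y / ((∑ y', p x y') * (∑ x', p x' y))) ≤ 1 := by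
    intro y
    set c : ℝ := ∑ x', p x' y with hc
    have hc0 : 0 ≤ c := Finset.sum_nonneg fun x _ => hp x y
    have hc1 : c ≤ 1 := by
      rw [← htot, Finset.sum_comm, hc]
      refine Finset.single_le_sum (f := fun y' => ∑ x', p x' y') (fun y' _ => ?_)
        (Finset.mem_univ y)
      exact Finset.sum_nonneg fun x _ => hp x y'
    have step1 : ∀ x, p x y * Real.log (p x y / ((∑ y', p x y') * c))
        ≤ p x y * (-Real.log c) := by
      intro x
      rcases eq_or_lt_of_le (hp x y) with h0 | h0
      · rw [← h0]; simp
      · have hr : 0 < ∑ y', p x y' :=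
          lt_of_lt_of_le h0 (Finset.single_le_sum (fun y' _ => hp x y') (Finset.mem_univ y))
        have hcpos : 0 < c :=
          lt_of_lt_of_le h0 (Finset.single_le_sum (fun x' _ => hp x' y) (Finset.mem_univ x))
        refine mul_le_mul_of_nonneg_left ?_ (hp x y)
        rw [Real.log_div (ne_of_gt h0) (by positivity),
          Real.log_mul (ne_of_gt hr) (ne_of_gt hcpos)]
        have : Real.log (p x y) ≤ Real.log (∑ y', p x y') :=
          Real.log_le_log h0 (Finset.single_le_sum (fun y' _ => hp x y') (Finset.mem_univ y))
        linarith
    calc ∑ x, p x y * Real.log (p x y / ((∑ y', p x y') * c))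
        ≤ ∑ x, p x y * (-Real.log c) := Finset.sum_le_sum fun x _ => step1 x
      _ = c * (-Real.log c) := by rw [← Finset.sum_mul]
      _ ≤ 1 := by
          rcases eq_or_lt_of_le hc0 with h0 | h0
          · simp [← h0]
          · have h1 : -Real.log c = Real.log c⁻¹ := (Real.log_inv c).symm
            have h2 : Real.log c⁻¹ ≤ c⁻¹ - 1 := Real.log_le_sub_one_of_pos (by positivity)
            have h3 : c * (c⁻¹ - 1) = 1 - c := by field_simp
            nlinarith
  calc ∑ y, ∑ x, p x y * Real.log (p x y / ((∑ y', p x y') * (∑ x', p x' y)))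
      ≤ ∑ y : Fin m, (1:ℝ) := Finset.sum_le_sum fun y _ => key y
    _ = m := by simp

end MIjointLemmas

section Bridges

lemma mutualInfo_eq_MIjoint {d n m : ℕ} (ρ : Fin n → Matrix (Fin d) (Fin d) ℂ)
    (π : Fin m → Matrix (Fin d) (Fin d) ℂ) (hsum : ∑ y, π y = 1) :
    mutualInfo ρ π = MIjoint (fun x y => ((ρ x * π y).trace).re) := by
  unfold mutualInfo MIjoint
  refine Finset.sum_congr rfl fun x _ => Finset.sum_congr rfl fun y _ => ?_
  have h : ((ρ x).trace).re = ∑ y', ((ρ x * π y').trace).re := by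
    rw [← Complex.re_sum, ← Matrix.trace_sum, ← Matrix.mul_sum, hsum, Matrix.mul_one]
  rw [h]

lemma total_one {d n m : ℕ} (ρ : Fin n → Matrix (Fin d) (Fin d) ℂ)
    (π : Fin m → Matrix (Fin d) (Fin d) ℂ) (hsum : ∑ y, π y = 1)
    (htr : ∑ x, (ρ x).trace = 1) :
    ∑ x, ∑ y, ((ρ x * π y).trace).re = 1 := by
  have h : ∀ x, ∑ y, ((ρ x * π y).trace).re = ((ρ x).trace).re := fun x => by
    rw [← Complex.re_sum, ← Matrix.trace_sum, ← Matrix.mul_sum, hsum, Matrix.mul_one]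
  simp only [h]
  rw [← Complex.re_sum, htr, Complex.one_re]

lemma mutualInfo_le_povmCard {d n m : ℕ} (ρ : Fin n → Matrix (Fin d) (Fin d) ℂ)
    (π : Fin m → Matrix (Fin d) (Fin d) ℂ) (hsum : ∑ y, π y = 1)
    (hpos : ∀ x y, 0 ≤ ((ρ x * π y).trace).re)
    (htot : ∑ x, ∑ y, ((ρ x * π y).trace).re = 1) :
    mutualInfo ρ π ≤ m := by
  rw [mutualInfo_eq_MIjoint ρ π hsum]
  exact MIjoint_le _ hpos htot

lemma mutualInfo_le_stateCard {d n m : ℕ} (ρ : Fin n → Matrix (Fin d) (Fin d) ℂ)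
    (π : Fin m → Matrix (Fin d) (Fin d) ℂ) (hsum : ∑ y, π y = 1)
    (hpos : ∀ x y, 0 ≤ ((ρ x * π y).trace).re)
    (htot : ∑ x, ∑ y, ((ρ x * π y).trace).re = 1) :
    mutualInfo ρ π ≤ n := by
  rw [mutualInfo_eq_MIjoint ρ π hsum, MIjoint_comm]
  refine MIjoint_le _ (fun y x => hpos x y) ?_
  rw [Finset.sum_comm]
  exact htot

lemma mutualInfo_single_state {d m : ℕ} (ρ0 : Matrix (Fin d) (Fin d) ℂ)
    (π : Fin m → Matrix (Fin d) (Fin d) ℂ) (hρtr : (ρ0.trace).re = 1) :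
    mutualInfo (fun _ : Fin 1 => ρ0) π = 0 := by
  unfold mutualInfo
  rw [Fin.sum_univ_one]
  refine Finset.sum_eq_zero fun y _ => ?_
  rw [Fin.sum_univ_one, hρtr, one_mul]
  rcases eq_or_ne (((ρ0 * π y).trace).re) 0 with h | h
  · rw [h]; simp
  · rw [div_self h, Real.log_one, mul_zero]

lemma mutualInfo_single_povm {d m : ℕ} (σ : Fin m → Matrix (Fin d) (Fin d) ℂ)
    (htot : ∑ x, ((σ x).trace).re = 1) :
    mutualInfo σ (fun _ : Fin 1 => (1 : Matrix (Fin d) (Fin d) ℂ)) = 0 := by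
  unfold mutualInfo
  refine Finset.sum_eq_zero fun x _ => ?_
  rw [Fin.sum_univ_one]
  simp only [Matrix.mul_one]
  rw [htot, mul_one]
  rcases eq_or_ne (((σ x).trace).re) 0 with h | h
  · rw [h]; simp
  · rw [div_self h, Real.log_one, mul_zero]

end Bridges

/-- duality between informational power and accessible information:
`W(π) = sup_ρ A((ρ^{1/2} π_y ρ^{1/2})_y)`, the supremum over density matrices `ρ`. -/
theorem infoPower_eq_sup_accInfo
    {d m : ℕ} (π : Fin m → Matrix (Fin d) (Fin d) ℂ) (hπ : IsPOVM π) :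
    infoPower π
      = sSup {w : ℝ | ∃ (ρ : Matrix (Fin d) (Fin d) ℂ) (h : ρ.PosSemidef),
          ρ.trace = 1 ∧ w = accInfo (fun y => h.sqrt * π y * h.sqrt)} := by
  classical
  obtain ⟨hπpsd, hπsum⟩ := hπ
  by_cases hd : d = 0
  · subst hd
    have h1 : {w : ℝ | ∃ (n : ℕ) (ρ : Fin n → Matrix (Fin 0) (Fin 0) ℂ),
        IsEnsemble ρ ∧ w = mutualInfo ρ π} = ∅ := by
      ext w
      simp only [Set.mem_setOf_eq, Set.mem_empty_iff_false, iff_false, not_exists]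
      rintro n ρ ⟨⟨-, htr⟩, -⟩
      have hz : ∀ x, (ρ x).trace = 0 := fun x => Matrix.trace_eq_zero_of_isEmpty _
      rw [Finset.sum_congr rfl fun x _ => hz x] at htr
      simp at htr
    have h2 : {w : ℝ | ∃ (ρ : Matrix (Fin 0) (Fin 0) ℂ) (h : ρ.PosSemidef),
        ρ.trace = 1 ∧ w = accInfo (fun y => h.sqrt * π y * h.sqrt)} = ∅ := by
      ext w
      simp only [Set.mem_setOf_eq, Set.mem_empty_iff_false, iff_false, not_exists]
      rintro ρ h ⟨htr, -⟩
      rw [Matrix.trace_eq_zero_of_isEmpty] at htr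
      simp at htr
    rw [infoPower, h1, h2]
  -- d ≠ 0
  -- the standard density matrix
  set ρ0 : Matrix (Fin d) (Fin d) ℂ := Matrix.diagonal (fun _ => (((d:ℝ)⁻¹ : ℝ) : ℂ)) with hρ0def
  have hρ0 : ρ0.PosSemidef := by
    refine posSemidef_diagonal_iff.mpr fun i => ?_
    rw [Complex.nonneg_iff]
    constructor <;> simp
  have hρ0tr : ρ0.trace = 1 := by
    rw [hρ0def, Matrix.trace_diagonal]
    rw [Finset.sum_const, Finset.card_univ, Fintype.card_fin, nsmul_eq_mul]
    rw [← Complex.ofReal_natCast, ← Complex.ofReal_mul, ← Complex.ofReal_one]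
    congr 1
    field_simp
  -- PSD of conjugated effects
  have sigma_psd : ∀ {ρc : Matrix (Fin d) (Fin d) ℂ} (hc : ρc.PosSemidef) (y : Fin m),
      (hc.sqrt * π y * hc.sqrt).PosSemidef := by
    intro ρc hc y
    have := (hπpsd y).conjTranspose_mul_mul_same hc.sqrt
    rwa [hc.posSemidef_sqrt.1.eq] at this
  have sigma_tr : ∀ {ρc : Matrix (Fin d) (Fin d) ℂ} (hc : ρc.PosSemidef), ρc.trace = 1 →
      ∑ y, (hc.sqrt * π y * hc.sqrt).trace = 1 := by
    intro ρc hc htrc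
    rw [← Matrix.trace_sum,
      show ∑ y, hc.sqrt * π y * hc.sqrt = hc.sqrt * (∑ y, π y) * hc.sqrt by
        rw [← Finset.sum_mul, ← Matrix.mul_sum],
      hπsum, Matrix.mul_one, hc.sqrt_mul_self, htrc]
  -- S₁ bounded above
  have bdd₁ : BddAbove {w : ℝ | ∃ (n : ℕ) (ρ : Fin n → Matrix (Fin d) (Fin d) ℂ),
      IsEnsemble ρ ∧ w = mutualInfo ρ π} := by
    refine ⟨(m:ℝ), ?_⟩
    rintro w ⟨n, ρ, ⟨hps, htr⟩, rfl⟩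
    exact mutualInfo_le_povmCard ρ π hπsum
      (fun x y => trace_mul_re_nonneg (hps x) (hπpsd y)) (total_one ρ π hπsum htr)
  -- 0 is attained by the single-state ensemble
  have mem0 : (0:ℝ) ∈ {w : ℝ | ∃ (n : ℕ) (ρ : Fin n → Matrix (Fin d) (Fin d) ℂ),
      IsEnsemble ρ ∧ w = mutualInfo ρ π} := by
    refine ⟨1, fun _ => ρ0, ⟨fun _ => hρ0, by rw [Fin.sum_univ_one, hρ0tr]⟩, ?_⟩
    rw [mutualInfo_single_state ρ0 π (by rw [hρ0tr, Complex.one_re])]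
  have h0le : 0 ≤ infoPower π := le_csSup bdd₁ mem0
  -- accInfo sets are bounded above by m
  have bddAcc : ∀ {ρc : Matrix (Fin d) (Fin d) ℂ} (hc : ρc.PosSemidef), ρc.trace = 1 →
      ∀ w ∈ {w : ℝ | ∃ (k : ℕ) (M : Fin k → Matrix (Fin d) (Fin d) ℂ),
        IsPOVM M ∧ w = mutualInfo (fun y => hc.sqrt * π y * hc.sqrt) M}, w ≤ (m:ℝ) := by
    intro ρc hc htrc w hw
    obtain ⟨k, M, ⟨hMpsd, hMsum⟩, rfl⟩ := hw
    exact mutualInfo_le_stateCard _ M hMsum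
      (fun y x => trace_mul_re_nonneg (sigma_psd hc y) (hMpsd x))
      (total_one _ M hMsum (sigma_tr hc htrc))
  have accBound : ∀ {ρc : Matrix (Fin d) (Fin d) ℂ} (hc : ρc.PosSemidef), ρc.trace = 1 →
      accInfo (fun y => hc.sqrt * π y * hc.sqrt) ≤ (m:ℝ) := by
    intro ρc hc htrc
    exact Real.sSup_le (bddAcc hc htrc) (Nat.cast_nonneg m)
  have bdd₂ : BddAbove {w : ℝ | ∃ (ρ : Matrix (Fin d) (Fin d) ℂ) (h : ρ.PosSemidef),
      ρ.trace = 1 ∧ w = accInfo (fun y => h.sqrt * π y * h.sqrt)} := by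
    refine ⟨(m:ℝ), ?_⟩
    rintro w ⟨ρc, hc, htrc, rfl⟩
    exact accBound hc htrc
  -- accInfo is nonnegative for densities
  have accNonneg : ∀ {ρc : Matrix (Fin d) (Fin d) ℂ} (hc : ρc.PosSemidef), ρc.trace = 1 →
      0 ≤ accInfo (fun y => hc.sqrt * π y * hc.sqrt) := by
    intro ρc hc htrc
    refine le_csSup ⟨(m:ℝ), fun w hw => bddAcc hc htrc w hw⟩ ?_
    refine ⟨1, fun _ => (1 : Matrix (Fin d) (Fin d) ℂ),
      ⟨fun _ => Matrix.PosSemidef.one, Fin.sum_univ_one _⟩, ?_⟩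
    rw [mutualInfo_single_povm _ ?_]
    rw [← Complex.re_sum, sigma_tr hc htrc, Complex.one_re]
  refine le_antisymm ?_ ?_
  · -- infoPower ≤ sSup S₂
    refine Real.sSup_le ?_ ?_
    swap
    · exact le_trans (accNonneg hρ0 hρ0tr) (le_csSup bdd₂ ⟨ρ0, hρ0, hρ0tr, rfl⟩)
    rintro w ⟨n, ρ, ⟨hps, htr⟩, rfl⟩
    have hn : n ≠ 0 := by
      rintro rfl
      simp at htr
    haveI : NeZero n := ⟨hn⟩
    set ρbar : Matrix (Fin d) (Fin d) ℂ := ∑ x, ρ x with hρbar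
    have hbar : ρbar.PosSemidef := posSemidef_sum _ _ fun x _ => hps x
    have htrbar : ρbar.trace = 1 := by rw [hρbar, Matrix.trace_sum]; exact htr
    have hTpsd := hbar.posSemidef_sqrt
    have hTT : hbar.sqrt * hbar.sqrt = ρbar := hbar.sqrt_mul_self
    obtain ⟨S, P, hS, hPpsd, h1P, hTS, hST, hPP, hPT, hTP⟩ := exists_pinv hTpsd
    have hPρ : ∀ x, P * ρ x * P = ρ x := by
      intro x
      refine proj_conj (hps x) h1P ?_ hTpsd.1 hTP
      rw [hTT]
      have e : ρbar - ρ x = ∑ x' ∈ Finset.univ.erase x, ρ x' := by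
        rw [hρbar, ← Finset.add_sum_erase _ _ (Finset.mem_univ x), add_sub_cancel_left]
      rw [e]
      exact posSemidef_sum _ _ fun x' _ => hps x'
    set M : Fin n → Matrix (Fin d) (Fin d) ℂ :=
      fun x => S * ρ x * S + (if x = 0 then 1 - P else 0) with hMdef
    have hMpsd : ∀ x, (M x).PosSemidef := by
      intro x
      refine Matrix.PosSemidef.add ?_ ?_
      · have := (hps x).conjTranspose_mul_mul_same S
        rwa [hS.1.eq] at this
      · split
        · exact h1P
        · exact Matrix.PosSemidef.zero
    have hMsum : ∑ x, M x = 1 := by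
      have e : ∑ x, M x = S * ρbar * S + (1 - P) := by
        rw [hMdef]
        rw [Finset.sum_add_distrib]
        congr 1
        · rw [hρbar, ← Finset.sum_mul, ← Matrix.mul_sum]
        · simp
      rw [e, show S * ρbar * S = P by
        rw [← hTT, show S * (hbar.sqrt * hbar.sqrt) * S = (S * hbar.sqrt) * (hbar.sqrt * S) by
          simp only [Matrix.mul_assoc], hST, hTS, hPP]]
      abel
    have hjoint : ∀ y x, ((hbar.sqrt * π y * hbar.sqrt) * M x).trace = (ρ x * π y).trace := by
      intro y x
      have hmain : ((hbar.sqrt * π y * hbar.sqrt) * (S * ρ x * S)).trace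
          = (ρ x * π y).trace := by
        have e1 : (hbar.sqrt * π y * hbar.sqrt) * (S * ρ x * S)
            = hbar.sqrt * (π y * (P * (ρ x * S))) := by
          simp only [Matrix.mul_assoc]
          rw [← Matrix.mul_assoc hbar.sqrt S (ρ x * S), hTS]
        rw [e1, Matrix.trace_mul_comm]
        have e2 : (π y * (P * (ρ x * S))) * hbar.sqrt = π y * ρ x := by
          simp only [Matrix.mul_assoc]
          rw [hST, show P * (ρ x * P) = P * ρ x * P from (Matrix.mul_assoc _ _ _).symm, hPρ x]
        rw [e2, Matrix.trace_mul_comm]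
      have hzero : (hbar.sqrt * π y * hbar.sqrt) * (1 - P) = 0 := by
        rw [Matrix.mul_sub, Matrix.mul_one,
          show hbar.sqrt * π y * hbar.sqrt * P = hbar.sqrt * π y * (hbar.sqrt * P) by
            simp only [Matrix.mul_assoc], hTP, sub_self]
      rw [hMdef]
      simp only []
      rcases eq_or_ne x 0 with h0 | h0
      · rw [if_pos h0, Matrix.mul_add, Matrix.trace_add, hmain, hzero, Matrix.trace_zero,
          add_zero]
      · rw [if_neg h0, add_zero, hmain]
    have hw : mutualInfo ρ π = mutualInfo (fun y => hbar.sqrt * π y * hbar.sqrt) M := by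
      rw [mutualInfo_eq_MIjoint ρ π hπsum,
        mutualInfo_eq_MIjoint (fun y => hbar.sqrt * π y * hbar.sqrt) M hMsum,
        MIjoint_comm]
      congr 1
      funext y x
      rw [hjoint y x]
    have step1 : mutualInfo ρ π ≤ accInfo (fun y => hbar.sqrt * π y * hbar.sqrt) := by
      rw [hw]
      exact le_csSup ⟨(m:ℝ), fun w hw' => bddAcc hbar htrbar w hw'⟩
        ⟨n, M, ⟨hMpsd, hMsum⟩, rfl⟩
    exact le_trans step1 (le_csSup bdd₂ ⟨ρbar, hbar, htrbar, rfl⟩)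
  · -- sSup S₂ ≤ infoPower
    refine Real.sSup_le ?_ h0le
    rintro w ⟨ρc, hc, htrc, rfl⟩
    rw [accInfo]
    refine Real.sSup_le ?_ h0le
    rintro w' ⟨k, M, ⟨hMpsd, hMsum⟩, rfl⟩
    have hens : IsEnsemble (fun x => hc.sqrt * M x * hc.sqrt) := by
      refine ⟨fun x => ?_, ?_⟩
      · have := (hMpsd x).conjTranspose_mul_mul_same hc.sqrt
        rwa [hc.posSemidef_sqrt.1.eq] at this
      · rw [← Matrix.trace_sum,
          show ∑ x, hc.sqrt * M x * hc.sqrt = hc.sqrt * (∑ x, M x) * hc.sqrt by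
            rw [← Finset.sum_mul, ← Matrix.mul_sum],
          hMsum, Matrix.mul_one, hc.sqrt_mul_self, htrc]
    have hjoint : ∀ y x, ((hc.sqrt * π y * hc.sqrt) * M x).trace
        = ((hc.sqrt * M x * hc.sqrt) * π y).trace := by
      intro y x
      calc ((hc.sqrt * π y * hc.sqrt) * M x).trace
          = (M x * (hc.sqrt * π y * hc.sqrt)).trace := Matrix.trace_mul_comm _ _
        _ = ((M x * (hc.sqrt * π y)) * hc.sqrt).trace := by
            rw [show M x * (hc.sqrt * π y * hc.sqrt) = (M x * (hc.sqrt * π y)) * hc.sqrt by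
              simp only [Matrix.mul_assoc]]
        _ = (hc.sqrt * (M x * (hc.sqrt * π y))).trace := Matrix.trace_mul_comm _ _
        _ = ((hc.sqrt * M x * hc.sqrt) * π y).trace := by
            rw [show hc.sqrt * (M x * (hc.sqrt * π y)) = (hc.sqrt * M x * hc.sqrt) * π y by
              simp only [Matrix.mul_assoc]]
    have hw : mutualInfo (fun y => hc.sqrt * π y * hc.sqrt) M
        = mutualInfo (fun x => hc.sqrt * M x * hc.sqrt) π := by
      rw [mutualInfo_eq_MIjoint (fun y => hc.sqrt * π y * hc.sqrt) M hMsum,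
        mutualInfo_eq_MIjoint (fun x => hc.sqrt * M x * hc.sqrt) π hπsum,
        MIjoint_comm]
      congr 1
      funext x y
      rw [hjoint y x]
    rw [hw, infoPower]
    exact le_csSup bdd₁ ⟨k, (fun x => hc.sqrt * M x * hc.sqrt), hens, rfl⟩
end
end

section
/- Let (π_y) be a POVM on ℂ^d with every π_y ≠ 0, and let (ψ_x) be a finite family of nonzero vectors in ℂ^d with ∑_x ‖ψ_x‖² = 1 (a pure-state ensemble with states ρ_x = |ψ_x⟩⟨ψ_x|). Then the mutual information satisfies I(ψ; π) ≤ ln d − ∑_{x,y} ‖ψ_x‖² (Tr π_y) · η( ⟨ψ_x|π_y|ψ_x⟩ / (‖ψ_x‖² Tr π_y) ), where η(u) := −u ln u. -/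
open MeasureTheory Matrix Finset Filter
open scoped ComplexOrder

noncomputable section

lemma kl_aux {m : ℕ} (q r : Fin m → ℝ) (hq : ∀ y, 0 ≤ q y) (hr : ∀ y, 0 < r y)
    (hq1 : ∑ y, q y = 1) (hr1 : ∑ y, r y = 1) :
    0 ≤ ∑ y, q y * Real.log (q y / r y) := by
  have h : ∀ y, q y - r y ≤ q y * Real.log (q y / r y) := by
    intro y
    rcases eq_or_lt_of_le (hq y) with h0 | hpos
    · simp [← h0]; exact (hr y).le
    · have h1 : Real.log (r y / q y) ≤ r y / q y - 1 :=
        Real.log_le_sub_one_of_pos (div_pos (hr y) hpos)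
      have h2 : Real.log (q y / r y) = - Real.log (r y / q y) := by
        rw [← Real.log_inv]; congr 1; field_simp
      have h3 := mul_le_mul_of_nonneg_left h1 hpos.le
      have h4 : q y * (r y / q y - 1) = r y - q y := by field_simp
      rw [h2]; nlinarith
  calc (0:ℝ) = ∑ y, (q y - r y) := by rw [Finset.sum_sub_distrib, hq1, hr1]; ring
    _ ≤ _ := Finset.sum_le_sum fun y _ => h y

lemma main_real {d n m : ℕ} (hd : 1 ≤ d) (p : Fin n → ℝ) (T : Fin m → ℝ)
    (P : Fin n → Fin m → ℝ)
    (hp : ∀ x, 0 < p x) (hT : ∀ y, 0 < T y) (hP : ∀ x y, 0 ≤ P x y)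
    (hPy : ∀ x, ∑ y, P x y = p x) (hp1 : ∑ x, p x = 1) (hTd : ∑ y, T y = (d:ℝ)) :
    ∑ x, ∑ y, P x y * Real.log (P x y / (p x * ∑ x', P x' y))
      ≤ Real.log d - ∑ x, ∑ y, p x * T y * etaFn (P x y / (p x * T y)) := by
  have hdpos : (0:ℝ) < d := by exact_mod_cast Nat.lt_of_lt_of_le Nat.zero_lt_one hd
  set q : Fin m → ℝ := fun y => ∑ x, P x y with hqdef
  have hq0 : ∀ y, 0 ≤ q y := fun y => Finset.sum_nonneg fun x _ => hP x y
  have hq1 : ∑ y, q y = 1 := by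
    rw [hqdef]; rw [Finset.sum_comm]
    simp only [hPy]; exact hp1
  have hstep1 : ∀ x y, p x * T y * etaFn (P x y / (p x * T y))
      = -(P x y * Real.log (P x y / (p x * T y))) := by
    intro x y
    have hne : p x * T y ≠ 0 := (mul_pos (hp x) (hT y)).ne'
    rw [etaFn, neg_mul, mul_neg, ← mul_assoc, mul_div_cancel₀ _ hne]
  have hR : ∑ x, ∑ y, p x * T y * etaFn (P x y / (p x * T y))
      = -∑ x, ∑ y, P x y * Real.log (P x y / (p x * T y)) := by
    simp only [hstep1, Finset.sum_neg_distrib]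
  rw [hR, sub_neg_eq_add]
  have hsplit : ∀ x y, P x y * Real.log (P x y / (p x * q y))
      = P x y * Real.log (P x y / (p x * T y)) + P x y * Real.log (T y)
        - P x y * Real.log (q y) := by
    intro x y
    rcases eq_or_lt_of_le (hP x y) with h0 | hpos
    · simp [← h0]
    · have hqpos : 0 < q y :=
        lt_of_lt_of_le hpos (Finset.single_le_sum (fun x' _ => hP x' y) (Finset.mem_univ x))
      rw [Real.log_div hpos.ne' (mul_pos (hp x) hqpos).ne',
        Real.log_div hpos.ne' (mul_pos (hp x) (hT y)).ne',
        Real.log_mul (hp x).ne' hqpos.ne', Real.log_mul (hp x).ne' (hT y).ne']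
      ring
  have hL : ∑ x, ∑ y, P x y * Real.log (P x y / (p x * q y))
      = (∑ x, ∑ y, P x y * Real.log (P x y / (p x * T y)))
        + (∑ y, q y * Real.log (T y)) - ∑ y, q y * Real.log (q y) := by
    simp only [hsplit, Finset.sum_add_distrib, Finset.sum_sub_distrib]
    congr 1
    · congr 1
      rw [Finset.sum_comm]
      exact Finset.sum_congr rfl fun y _ => (Finset.sum_mul _ _ _).symm
    · rw [Finset.sum_comm]
      exact Finset.sum_congr rfl fun y _ => (Finset.sum_mul _ _ _).symm
  have hKL : (∑ y, q y * Real.log (T y)) - ∑ y, q y * Real.log (q y) ≤ Real.log d := by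
    set r : Fin m → ℝ := fun y => T y / d with hrdef
    have hrpos : ∀ y, 0 < r y := fun y => div_pos (hT y) hdpos
    have hr1 : ∑ y, r y = 1 := by
      rw [hrdef, ← Finset.sum_div, hTd, div_self hdpos.ne']
    have h0 := kl_aux q r hq0 hrpos hq1 hr1
    have heq : ∀ y, q y * Real.log (q y / r y)
        = q y * Real.log (q y) - q y * Real.log (T y) + q y * Real.log d := by
      intro y
      rcases eq_or_lt_of_le (hq0 y) with h0' | hqpos
      · simp [← h0']
      · rw [Real.log_div hqpos.ne' (hrpos y).ne', hrdef,
          Real.log_div (hT y).ne' hdpos.ne']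
        ring
    have hsum : ∑ y, q y * Real.log (q y / r y)
        = (∑ y, q y * Real.log (q y)) - (∑ y, q y * Real.log (T y)) + Real.log d := by
      simp only [heq, Finset.sum_add_distrib, Finset.sum_sub_distrib, ← Finset.sum_mul, hq1,
        one_mul]
    linarith [hsum ▸ h0]
  rw [hL]
  linarith

lemma trace_vecMulVec_mul {d : ℕ} (a b : Fin d → ℂ) (M : Matrix (Fin d) (Fin d) ℂ) :
    (Matrix.vecMulVec a b * M).trace = dotProduct b (M.mulVec a) := by
  simp only [Matrix.trace, Matrix.diag, Matrix.mul_apply, Matrix.vecMulVec_apply,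
    dotProduct, Matrix.mulVec, Finset.mul_sum]
  rw [Finset.sum_comm]
  exact Finset.sum_congr rfl fun j _ => Finset.sum_congr rfl fun i _ => by ring

lemma trace_vecMulVec_self {d : ℕ} (ψ : EuclideanSpace ℂ (Fin d)) :
    (Matrix.vecMulVec (fun i => ψ i) (fun j => starRingEnd ℂ (ψ j))).trace
      = ((‖ψ‖^2 : ℝ) : ℂ) := by
  simp only [Matrix.trace, Matrix.diag, Matrix.vecMulVec_apply, Complex.mul_conj]
  rw [EuclideanSpace.norm_eq, Real.sq_sqrt (by positivity)]
  push_cast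
  refine Finset.sum_congr rfl fun i _ => ?_
  rw [Complex.normSq_eq_norm_sq]
  norm_num

lemma trace_re_pos_of_posSemidef {d : ℕ} {M : Matrix (Fin d) (Fin d) ℂ}
    (h : M.PosSemidef) (h0 : M ≠ 0) : 0 < M.trace.re := by
  obtain ⟨B, hBB⟩ : ∃ B : Matrix (Fin d) (Fin d) ℂ, M = star B * B := by
    open scoped MatrixOrder in exact CStarAlgebra.nonneg_iff_eq_star_mul_self.mp h.nonneg
  rw [Matrix.star_eq_conjTranspose] at hBB
  subst hBB
  have hB : B ≠ 0 := by rintro rfl; simp at h0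
  have h1 : (Bᴴ * B).trace = ∑ j, ∑ i, ((Complex.normSq (B i j) : ℝ) : ℂ) := by
    simp only [Matrix.trace, Matrix.diag, Matrix.mul_apply, Matrix.conjTranspose_apply]
    refine Finset.sum_congr rfl fun j _ => Finset.sum_congr rfl fun i _ => ?_
    simp [Complex.star_def, Complex.mul_conj, mul_comm]
  rw [h1]
  simp only [Complex.re_sum, Complex.ofReal_re]
  obtain ⟨i, j, hij⟩ : ∃ i j, B i j ≠ 0 := by
    by_contra hc; push_neg at hc; exact hB (by ext i j; exact hc i j)
  have hpos : 0 < Complex.normSq (B i j) := Complex.normSq_pos.mpr hij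
  refine Finset.sum_pos' (fun j _ => Finset.sum_nonneg fun i _ => Complex.normSq_nonneg _) ?_
  exact ⟨j, Finset.mem_univ _,
    Finset.sum_pos' (fun i _ => Complex.normSq_nonneg _) ⟨i, Finset.mem_univ _, hpos⟩⟩

/-- for any POVM `π` with nonzero effects and any pure-state ensemble given
by nonzero vectors `ψ_x` with `∑_x ‖ψ_x‖² = 1`,
`I(ψ; π) ≤ ln d − ∑_{x,y} ‖ψ_x‖² (Tr π_y) η(⟨ψ_x|π_y|ψ_x⟩ / (‖ψ_x‖² Tr π_y))`. -/
theorem mutualInfo_pure_le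
    {d m n : ℕ} (hd : 1 ≤ d)
    (π : Fin m → Matrix (Fin d) (Fin d) ℂ) (hπ : IsPOVM π) (hπ0 : ∀ y, π y ≠ 0)
    (ψ : Fin n → EuclideanSpace ℂ (Fin d)) (hψ0 : ∀ x, ψ x ≠ 0)
    (hnorm : ∑ x, ‖ψ x‖ ^ 2 = 1) :
    mutualInfo
        (fun x => Matrix.vecMulVec (fun i => ψ x i) (fun j => starRingEnd ℂ (ψ x j))) π
      ≤ Real.log d
        - ∑ x, ∑ y, ‖ψ x‖ ^ 2 * ((π y).trace).re *
            etaFn ((dotProduct (fun i => starRingEnd ℂ (ψ x i))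
                ((π y).mulVec fun i => ψ x i)).re
              / (‖ψ x‖ ^ 2 * ((π y).trace).re)) := by
  have htrρπ : ∀ x y,
      ((Matrix.vecMulVec (fun i => ψ x i) (fun j => starRingEnd ℂ (ψ x j))) * π y).trace
        = dotProduct (fun i => starRingEnd ℂ (ψ x i)) ((π y).mulVec fun i => ψ x i) :=
    fun x y => trace_vecMulVec_mul _ _ _
  have htrρ : ∀ x,
      (Matrix.vecMulVec (fun i => ψ x i) (fun j => starRingEnd ℂ (ψ x j))).trace
        = ((‖ψ x‖^2 : ℝ) : ℂ) := fun x => trace_vecMulVec_self _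
  have hppos : ∀ x, 0 < ‖ψ x‖ ^ 2 := fun x => pow_pos (norm_pos_iff.mpr (hψ0 x)) 2
  have hTpos : ∀ y, 0 < ((π y).trace).re :=
    fun y => trace_re_pos_of_posSemidef (hπ.1 y) (hπ0 y)
  have hPpos : ∀ x y, 0 ≤ (dotProduct (fun i => starRingEnd ℂ (ψ x i))
      ((π y).mulVec fun i => ψ x i)).re := by
    intro x y
    have h2 := (hπ.1 y).dotProduct_mulVec_nonneg (fun i => ψ x i)
    have hst : (star fun i => ψ x i) = fun i => starRingEnd ℂ (ψ x i) := by
      funext i; simp [Complex.star_def]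
    rw [hst] at h2
    exact (Complex.nonneg_iff.mp h2).1
  have hPsum : ∀ x, ∑ y, (dotProduct (fun i => starRingEnd ℂ (ψ x i))
      ((π y).mulVec fun i => ψ x i)).re = ‖ψ x‖ ^ 2 := by
    intro x
    have h1 : ∑ y, dotProduct (fun i => starRingEnd ℂ (ψ x i))
        ((π y).mulVec fun i => ψ x i) = ((‖ψ x‖^2 : ℝ) : ℂ) := by
      simp only [← htrρπ x]
      rw [← Matrix.trace_sum, ← Finset.mul_sum, hπ.2, mul_one, htrρ x]
    rw [← Complex.re_sum, h1, Complex.ofReal_re]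
  have hTsum : ∑ y, ((π y).trace).re = (d : ℝ) := by
    have h1 : ∑ y, (π y).trace = (d : ℂ) := by
      rw [← Matrix.trace_sum, hπ.2, Matrix.trace_one]
      simp
    rw [← Complex.re_sum, h1, Complex.natCast_re]
  have hMI : mutualInfo
      (fun x => Matrix.vecMulVec (fun i => ψ x i) (fun j => starRingEnd ℂ (ψ x j))) π
      = ∑ x, ∑ y, (dotProduct (fun i => starRingEnd ℂ (ψ x i))
          ((π y).mulVec fun i => ψ x i)).re *
        Real.log ((dotProduct (fun i => starRingEnd ℂ (ψ x i))
            ((π y).mulVec fun i => ψ x i)).re /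
          (‖ψ x‖ ^ 2 * ∑ x', (dotProduct (fun i => starRingEnd ℂ (ψ x' i))
            ((π y).mulVec fun i => ψ x' i)).re)) := by
    unfold mutualInfo
    simp only [htrρπ, htrρ, Complex.ofReal_re]
  rw [hMI]
  exact main_real hd (fun x => ‖ψ x‖ ^ 2) (fun y => ((π y).trace).re)
    (fun x y => (dotProduct (fun i => starRingEnd ℂ (ψ x i))
      ((π y).mulVec fun i => ψ x i)).re) hppos hTpos hPpos hPsum hnorm hTsum
end
end

section
/- Let (π_y) be a 2-design POVM on ℂ^d. Then for every ensemble (ρ_x), the mutual information satisfies I(ρ; π) ≤ W_2(d) := ln(2d/(d+1)); hence the informational power of (π_y) is at most ln(2d/(d+1)). -/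
open MeasureTheory Matrix Finset Filter
open scoped ComplexOrder

noncomputable section

/-! ### Auxiliary lemmas -/

section Aux

variable {d : ℕ}

lemma psd_diag_nonneg {M : Matrix (Fin d) (Fin d) ℂ} (h : M.PosSemidef) (i : Fin d) :
    0 ≤ M i i := by
  have := h.diag_nonneg (i := i)
  simpa [Matrix.mulVec_single, dotProduct, Pi.single_apply] using this

lemma psd_trace_nonneg' {M : Matrix (Fin d) (Fin d) ℂ} (h : M.PosSemidef) :
    0 ≤ M.trace :=
  Finset.sum_nonneg fun i _ => psd_diag_nonneg h i

lemma nonneg_re_eq {z : ℂ} (h : 0 ≤ z) : z = ((z.re : ℝ) : ℂ) := by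
  obtain ⟨h1, h2⟩ := Complex.nonneg_iff.mp h
  apply Complex.ext <;> simp [← h2]

lemma psd_mul_trace_nonneg {M N : Matrix (Fin d) (Fin d) ℂ} (hM : M.PosSemidef)
    (hN : N.PosSemidef) : 0 ≤ (M * N).trace := by
  classical
  open scoped MatrixOrder in
  have hs : CFC.sqrt M * CFC.sqrt M = M := CFC.sqrt_mul_sqrt_self M hM.nonneg
  open scoped MatrixOrder in
  have herm : (CFC.sqrt M)ᴴ = CFC.sqrt M := (CFC.sqrt_nonneg M).posSemidef.isHermitian
  have hpsd : (CFC.sqrt M * N * CFC.sqrt M).PosSemidef := by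
    have := hN.conjTranspose_mul_mul_same (CFC.sqrt M)
    rwa [herm] at this
  have heq : (M * N).trace = (CFC.sqrt M * N * CFC.sqrt M).trace := by
    rw [Matrix.trace_mul_cycle, hs]
  rw [heq]
  exact psd_trace_nonneg' hpsd

lemma entry_bound {M : Matrix (Fin d) (Fin d) ℂ} (hM : M.PosSemidef) (i j : Fin d) :
    ‖M i j‖ ^ 2 ≤ (M i i).re * (M j j).re := by
  classical
  open scoped MatrixOrder in
  have hs : CFC.sqrt M * CFC.sqrt M = M := CFC.sqrt_mul_sqrt_self M hM.nonneg
  open scoped MatrixOrder in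
  have herm : (CFC.sqrt M)ᴴ = CFC.sqrt M := (CFC.sqrt_nonneg M).posSemidef.isHermitian
  set s := CFC.sqrt M with hsdef
  have hentry : ∀ a b, M a b = ∑ k, (starRingEnd ℂ) (s k a) * s k b := by
    intro a b
    rw [← hs, Matrix.mul_apply]
    refine Finset.sum_congr rfl fun k _ => ?_
    congr 1
    have := congrFun (congrFun herm a) k
    simpa [Matrix.conjTranspose_apply] using this.symm
  have hdiag : ∀ a, (M a a).re = ∑ k, ‖s k a‖ ^ 2 := by
    intro a
    rw [hentry a a, Complex.re_sum]
    refine Finset.sum_congr rfl fun k _ => ?_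
    rw [mul_comm, Complex.mul_conj]
    simp [Complex.sq_norm]
  have habs : ‖M i j‖ ≤ ∑ k, ‖s k i‖ * ‖s k j‖ := by
    rw [hentry i j]
    refine (norm_sum_le _ _).trans_eq ?_
    refine Finset.sum_congr rfl fun k _ => ?_
    simp [_root_.map_mul]
  calc ‖M i j‖ ^ 2 ≤ (∑ k, ‖s k i‖ * ‖s k j‖) ^ 2 := by
        have h0 : (0:ℝ) ≤ ‖M i j‖ := norm_nonneg _
        exact pow_le_pow_left₀ h0 habs 2
    _ ≤ (∑ k, ‖s k i‖ ^ 2) * (∑ k, ‖s k j‖ ^ 2) :=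
        Finset.sum_mul_sq_le_sq_mul_sq _ _ _
    _ = (M i i).re * (M j j).re := by rw [hdiag, hdiag]

lemma trace_sq_le {M : Matrix (Fin d) (Fin d) ℂ} (hM : M.PosSemidef) :
    ((M * M).trace).re ≤ ((M.trace).re) ^ 2 := by
  classical
  have h1 : ((M * M).trace).re = ∑ i, ∑ j, ‖M i j‖ ^ 2 := by
    rw [Matrix.trace, Complex.re_sum]
    refine Finset.sum_congr rfl fun i _ => ?_
    rw [Matrix.diag_apply, Matrix.mul_apply, Complex.re_sum]
    refine Finset.sum_congr rfl fun j _ => ?_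
    have : (starRingEnd ℂ) (M i j) = M j i := by
      simpa [Matrix.conjTranspose_apply] using congrFun (congrFun hM.isHermitian j) i
    rw [← this, Complex.mul_conj]
    simp [Complex.sq_norm]
  have h2 : ((M.trace).re) ^ 2 = ∑ i, ∑ j, (M i i).re * (M j j).re := by
    rw [Matrix.trace, Complex.re_sum, sq, Finset.sum_mul_sum]
    simp [Matrix.diag_apply]
  rw [h1, h2]
  exact Finset.sum_le_sum fun i _ => Finset.sum_le_sum fun j _ => entry_bound hM i j

lemma psd_trace_re_pos {M : Matrix (Fin d) (Fin d) ℂ} (h : M.PosSemidef) (hM : M ≠ 0) :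
    0 < (M.trace).re := by
  have h0 : 0 ≤ (M.trace).re := (Complex.nonneg_iff.mp (psd_trace_nonneg' h)).1
  rcases h0.eq_or_lt with h0 | h0
  · exfalso
    apply hM
    have hdiagre : ∀ i, 0 ≤ (M i i).re := fun i =>
      (Complex.nonneg_iff.mp (psd_diag_nonneg h i)).1
    have hsum : ∑ i, (M i i).re = 0 := by
      rw [← Complex.re_sum]
      exact h0.symm
    have hzero : ∀ i, (M i i).re = 0 := by
      intro i
      have := Finset.sum_eq_zero_iff_of_nonneg (fun i _ => hdiagre i) |>.mp hsum
      exact this i (Finset.mem_univ i)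
    ext i j
    have := entry_bound h i j
    rw [hzero i, hzero j, mul_zero] at this
    have habs : ‖M i j‖ = 0 := by
      have h4 : (0:ℝ) ≤ ‖M i j‖ := norm_nonneg _
      nlinarith
    simpa using (norm_eq_zero.mp habs)
  · exact h0

lemma sum_fn_two (F : Fin d → Fin d → ℂ) :
    ∑ f : Fin 2 → Fin d, F (f 0) (f 1) = ∑ a : Fin d, ∑ b : Fin d, F a b := by
  rw [← Equiv.sum_comp (finTwoArrowEquiv (Fin d)).symm (fun f => F (f 0) (f 1))]
  simp [finTwoArrowEquiv, Fintype.sum_prod_type]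

lemma trace_tensor_mul (ρ σ : Matrix (Fin d) (Fin d) ℂ) :
    (matTensorPow ρ 2 * matTensorPow σ 2).trace = ((ρ * σ).trace) ^ 2 := by
  have lhs : (matTensorPow ρ 2 * matTensorPow σ 2).trace
      = ∑ f : Fin 2 → Fin d, ∑ g : Fin 2 → Fin d,
          (ρ (f 0) (g 0) * ρ (f 1) (g 1)) * (σ (g 0) (f 0) * σ (g 1) (f 1)) := by
    rw [Matrix.trace]
    refine Finset.sum_congr rfl fun f _ => ?_
    rw [Matrix.diag_apply, Matrix.mul_apply]
    refine Finset.sum_congr rfl fun g _ => ?_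
    simp [matTensorPow, Fin.prod_univ_two]
  rw [lhs]
  rw [sum_fn_two (fun a b => ∑ g : Fin 2 → Fin d,
      (ρ a (g 0) * ρ b (g 1)) * (σ (g 0) a * σ (g 1) b))]
  have hinner : ∀ a b : Fin d, ∑ g : Fin 2 → Fin d,
      (ρ a (g 0) * ρ b (g 1)) * (σ (g 0) a * σ (g 1) b)
      = ∑ c : Fin d, ∑ e : Fin d, (ρ a c * ρ b e) * (σ c a * σ e b) := by
    intro a b
    exact sum_fn_two (fun c e => (ρ a c * ρ b e) * (σ c a * σ e b))
  simp_rw [hinner]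
  have rhs : ((ρ * σ).trace) ^ 2
      = (∑ a, ∑ c, ρ a c * σ c a) * (∑ b, ∑ e, ρ b e * σ e b) := by
    rw [sq]
    congr 1 <;>
    · rw [Matrix.trace]
      exact Finset.sum_congr rfl fun a _ => by rw [Matrix.diag_apply, Matrix.mul_apply]
  rw [rhs, Finset.sum_mul_sum]
  refine Finset.sum_congr rfl fun a _ => Finset.sum_congr rfl fun b _ => ?_
  rw [Finset.sum_mul_sum]
  exact Finset.sum_congr rfl fun c _ => Finset.sum_congr rfl fun e _ => by ring

lemma perm_fin_two :
    (Finset.univ : Finset (Equiv.Perm (Fin 2))) = {Equiv.refl (Fin 2), Equiv.swap 0 1} := by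
  decide

lemma trace_tensor_symProj (ρ : Matrix (Fin d) (Fin d) ℂ) :
    (matTensorPow ρ 2 * symProj 2 d).trace = ((ρ.trace) ^ 2 + (ρ * ρ).trace) / 2 := by
  have key : ∀ σ : Equiv.Perm (Fin 2),
      (matTensorPow ρ 2 *
        (Matrix.of (fun f g => if (∀ i, f (σ i) = g i) then (1:ℂ) else 0) :
          Matrix (Fin 2 → Fin d) (Fin 2 → Fin d) ℂ)).trace
      = ∑ g : Fin 2 → Fin d, ρ (g (σ 0)) (g 0) * ρ (g (σ 1)) (g 1) := by
    intro σ
    rw [Matrix.trace]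
    simp only [Matrix.diag_apply, Matrix.mul_apply, Matrix.of_apply]
    rw [Finset.sum_comm]
    refine Finset.sum_congr rfl fun g _ => ?_
    have hcond : ∀ f : Fin 2 → Fin d, (∀ i, g (σ i) = f i) ↔ f = fun i => g (σ i) := by
      intro f
      rw [funext_iff]
      exact ⟨fun h i => (h i).symm, fun h i => (h i).symm⟩
    simp only [hcond, mul_ite, mul_one, mul_zero]
    rw [Finset.sum_ite_eq' Finset.univ (fun i => g (σ i)) (fun f => matTensorPow ρ 2 f g)]
    simp [matTensorPow, Fin.prod_univ_two]
  have hrefl : ∑ g : Fin 2 → Fin d,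
      ρ (g ((Equiv.refl (Fin 2)) 0)) (g 0) * ρ (g ((Equiv.refl (Fin 2)) 1)) (g 1)
      = (ρ.trace) ^ 2 := by
    simp only [Equiv.refl_apply]
    rw [sum_fn_two (fun a b => ρ a a * ρ b b)]
    rw [Matrix.trace, sq, Finset.sum_mul_sum]
    simp [Matrix.diag_apply]
  have hswap : ∑ g : Fin 2 → Fin d,
      ρ (g ((Equiv.swap 0 1 : Equiv.Perm (Fin 2)) 0)) (g 0) *
        ρ (g ((Equiv.swap 0 1 : Equiv.Perm (Fin 2)) 1)) (g 1)
      = (ρ * ρ).trace := by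
    have h0 : (Equiv.swap 0 1 : Equiv.Perm (Fin 2)) 0 = 1 := by decide
    have h1 : (Equiv.swap 0 1 : Equiv.Perm (Fin 2)) 1 = 0 := by decide
    rw [h0, h1]
    rw [sum_fn_two (fun a b => ρ b a * ρ a b)]
    have : (ρ * ρ).trace = ∑ a : Fin d, ∑ b : Fin d, ρ a b * ρ b a := by
      rw [Matrix.trace]
      exact Finset.sum_congr rfl fun a _ => by rw [Matrix.diag_apply, Matrix.mul_apply]
    rw [this, Finset.sum_comm]
  rw [symProj, Matrix.mul_smul, Matrix.trace_smul, Matrix.mul_sum, Matrix.trace_sum]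
  rw [perm_fin_two, Finset.sum_pair (by decide : (Equiv.refl (Fin 2)) ≠ Equiv.swap 0 1)]
  rw [key, key, hrefl, hswap]
  rw [show (Nat.factorial 2 : ℂ) = 2 by norm_num [Nat.factorial]]
  rw [smul_eq_mul]
  ring

lemma design_scalar (hd : 1 ≤ d) {m : ℕ} {π : Fin m → Matrix (Fin d) (Fin d) ℂ}
    (hdes : ((d : ℂ))⁻¹ • ∑ y, (((π y).trace) ^ (2 - 1))⁻¹ • matTensorPow (π y) 2
        = ((Nat.choose (d - 1 + 2) 2 : ℂ))⁻¹ • symProj 2 d)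
    (ρ : Matrix (Fin d) (Fin d) ℂ) :
    ∑ y, ((π y).trace)⁻¹ * ((ρ * π y).trace) ^ 2
      = ((ρ.trace) ^ 2 + (ρ * ρ).trace) / ((d : ℂ) + 1) := by
  have hd0 : (d : ℂ) ≠ 0 := Nat.cast_ne_zero.mpr (by omega)
  have hd1 : (d : ℂ) + 1 ≠ 0 := by
    have := Nat.cast_add_one_ne_zero (R := ℂ) d
    push_cast at this ⊢
    exact this
  set S := ∑ y, ((π y).trace)⁻¹ * ((ρ * π y).trace) ^ 2 with hSdef
  set X := (ρ.trace) ^ 2 + (ρ * ρ).trace with hXdef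
  set ch := (Nat.choose (d - 1 + 2) 2 : ℂ) with hchdef
  have hch : ch * 2 = ((d : ℂ) + 1) * d := by
    have h : d - 1 + 2 = d + 1 := by omega
    have hnat : (d + 1).choose 2 * 2 = (d + 1) * d := by
      rw [Nat.choose_two_right]
      simp only [Nat.add_sub_cancel]
      exact Nat.div_mul_cancel (by simpa [mul_comm] using Even.two_dvd (Nat.even_mul_succ_self d))
    rw [hchdef, h]
    calc ((Nat.choose (d+1) 2 : ℕ) : ℂ) * 2 = (((d+1).choose 2 * 2 : ℕ) : ℂ) := by
          push_cast; ring
      _ = (((d+1) * d : ℕ) : ℂ) := by rw [hnat]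
      _ = ((d : ℂ) + 1) * d := by push_cast; ring
  have hch0 : ch ≠ 0 := by
    intro h
    rw [h, zero_mul] at hch
    exact (mul_ne_zero hd1 hd0) hch.symm
  have E := congrArg (fun M => (matTensorPow ρ 2 * M).trace) hdes
  simp only [show (2-1 : ℕ) = 1 from rfl, Matrix.mul_smul, Matrix.trace_smul, Matrix.mul_sum,
    Matrix.trace_sum, smul_eq_mul, pow_one, trace_tensor_mul, trace_tensor_symProj] at E
  rw [show ((d:ℂ))⁻¹ * ∑ y, ((π y).trace)⁻¹ * ((ρ * π y).trace) ^ 2 = (d:ℂ)⁻¹ * S from rfl] at E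
  rw [inv_mul_eq_div, div_eq_iff hd0] at E
  rw [hSdef] at E ⊢
  rw [E, eq_div_iff hd1]
  field_simp [hch0]
  rw [← hXdef]
  linear_combination (-X) * hch

lemma info_bound {n m : ℕ} (p : Fin n → Fin m → ℝ) (px : Fin n → ℝ) (u : Fin m → ℝ) (C : ℝ)
    (hC : 1 ≤ C)
    (hp0 : ∀ x y, 0 ≤ p x y)
    (hpx : ∀ x, ∑ y, p x y = px x)
    (hpx1 : ∑ x, px x = 1)
    (hu0 : ∀ y, 0 < u y)
    (hu1 : ∑ y, u y = 1)
    (hkey : ∀ x, ∑ y, (p x y) ^ 2 / (u y) ≤ C * (px x) ^ 2) :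
    ∑ x, ∑ y, p x y * Real.log (p x y / (px x * ∑ x', p x' y)) ≤ Real.log C := by
  have hC0 : (0 : ℝ) < C := lt_of_lt_of_le one_pos hC
  have hpxnn : ∀ x, 0 ≤ px x := fun x => (hpx x) ▸ Finset.sum_nonneg fun y _ => hp0 x y
  have hple : ∀ x y, p x y ≤ px x := fun x y => (hpx x) ▸
    Finset.single_le_sum (fun y _ => hp0 x y) (Finset.mem_univ y)
  have hqle : ∀ x y, p x y ≤ ∑ x', p x' y := fun x y =>
    Finset.single_le_sum (fun x' _ => hp0 x' y) (Finset.mem_univ x)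
  have hterm : ∀ x y, p x y * Real.log (p x y / (px x * ∑ x', p x' y))
      ≤ p x y * Real.log C + (p x y) ^ 2 / (px x * u y * C) - 2 * p x y
        + p x y * (u y / ∑ x', p x' y) := by
    intro x y
    rcases eq_or_lt_of_le (hp0 x y) with h | h
    · rw [← h]
      simp
    · have hpxp : 0 < px x := lt_of_lt_of_le h (hple x y)
      have hqp : 0 < ∑ x', p x' y := lt_of_lt_of_le h (hqle x y)
      have hup := hu0 y
      have hsplit : p x y / (px x * ∑ x', p x' y)
          = (p x y / (px x * u y * C)) * C * (u y / ∑ x', p x' y) := by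
        field_simp
      have hlog1 : Real.log (p x y / (px x * u y * C)) ≤ p x y / (px x * u y * C) - 1 :=
        Real.log_le_sub_one_of_pos (by positivity)
      have hlog2 : Real.log (u y / ∑ x', p x' y) ≤ u y / (∑ x', p x' y) - 1 :=
        Real.log_le_sub_one_of_pos (by positivity)
      have hlogeq : Real.log (p x y / (px x * ∑ x', p x' y))
          = Real.log (p x y / (px x * u y * C)) + Real.log C
            + Real.log (u y / ∑ x', p x' y) := by
        rw [hsplit, Real.log_mul (by positivity) (by positivity),
          Real.log_mul (by positivity) (by positivity)]
      rw [hlogeq]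
      have hcomb : Real.log (p x y / (px x * u y * C)) + Real.log C
            + Real.log (u y / ∑ x', p x' y)
          ≤ (p x y / (px x * u y * C) - 1) + Real.log C + (u y / (∑ x', p x' y) - 1) := by
        linarith
      calc p x y * (Real.log (p x y / (px x * u y * C)) + Real.log C
            + Real.log (u y / ∑ x', p x' y))
          ≤ p x y * ((p x y / (px x * u y * C) - 1) + Real.log C
              + (u y / (∑ x', p x' y) - 1)) :=
            mul_le_mul_of_nonneg_left hcomb (le_of_lt h)
        _ = p x y * Real.log C + (p x y) ^ 2 / (px x * u y * C) - 2 * p x y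
              + p x y * (u y / ∑ x', p x' y) := by ring
  have main : ∑ x, ∑ y, p x y * Real.log (p x y / (px x * ∑ x', p x' y))
      ≤ ∑ x, ∑ y, (p x y * Real.log C + (p x y) ^ 2 / (px x * u y * C) - 2 * p x y
        + p x y * (u y / ∑ x', p x' y)) :=
    Finset.sum_le_sum fun x _ => Finset.sum_le_sum fun y _ => hterm x y
  refine main.trans ?_
  have hsplit : ∑ x, ∑ y, (p x y * Real.log C + (p x y) ^ 2 / (px x * u y * C) - 2 * p x y
        + p x y * (u y / ∑ x', p x' y))
      = (∑ x, ∑ y, p x y * Real.log C) + (∑ x, ∑ y, (p x y) ^ 2 / (px x * u y * C))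
        - (∑ x, ∑ y, 2 * p x y) + (∑ x, ∑ y, p x y * (u y / ∑ x', p x' y)) := by
    rw [← Finset.sum_add_distrib, ← Finset.sum_sub_distrib, ← Finset.sum_add_distrib]
    refine Finset.sum_congr rfl fun x _ => ?_
    rw [← Finset.sum_add_distrib, ← Finset.sum_sub_distrib, ← Finset.sum_add_distrib]
  rw [hsplit]
  have e1 : ∑ x, ∑ y, p x y * Real.log C = Real.log C := by
    have hx : ∀ x, ∑ y, p x y * Real.log C = px x * Real.log C := by
      intro x; rw [← Finset.sum_mul, hpx]
    simp_rw [hx, ← Finset.sum_mul, hpx1, one_mul]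
  have e2 : ∑ x, ∑ y, (p x y) ^ 2 / (px x * u y * C) ≤ 1 := by
    have hx : ∀ x, ∑ y, (p x y) ^ 2 / (px x * u y * C) ≤ px x := by
      intro x
      rcases eq_or_lt_of_le (hpxnn x) with h0 | h0
      · have hz : ∀ y, p x y = 0 := by
          intro y
          have h1 := hple x y
          have h2 := hp0 x y
          linarith [h0.symm.le, h0.symm.ge]
        rw [← h0]
        refine le_of_eq (Finset.sum_eq_zero fun y _ => ?_)
        rw [hz y]
        simp
      · have hy : ∀ y, (p x y) ^ 2 / (px x * u y * C)
            = ((p x y) ^ 2 / u y) * (1 / (px x * C)) := by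
          intro y
          field_simp
        have hrw : ∑ y, (p x y) ^ 2 / (px x * u y * C)
            = (∑ y, (p x y) ^ 2 / u y) * (1 / (px x * C)) := by
          rw [Finset.sum_mul]
          exact Finset.sum_congr rfl fun y _ => hy y
        rw [hrw]
        calc (∑ y, (p x y) ^ 2 / u y) * (1 / (px x * C))
            ≤ (C * (px x) ^ 2) * (1 / (px x * C)) := by
              apply mul_le_mul_of_nonneg_right (hkey x) (by positivity)
          _ = px x := by field_simp
    calc ∑ x, ∑ y, (p x y) ^ 2 / (px x * u y * C) ≤ ∑ x, px x :=
          Finset.sum_le_sum fun x _ => hx x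
      _ = 1 := hpx1
  have e3 : ∑ x, ∑ y, 2 * p x y = 2 := by
    simp_rw [← Finset.mul_sum, hpx, hpx1, mul_one]
  have e4 : ∑ x, ∑ y, p x y * (u y / ∑ x', p x' y) ≤ 1 := by
    rw [Finset.sum_comm]
    have hy : ∀ y, ∑ x, p x y * (u y / ∑ x', p x' y) ≤ u y := by
      intro y
      rw [← Finset.sum_mul]
      rcases eq_or_lt_of_le (Finset.sum_nonneg fun x _ => hp0 x y :
          (0:ℝ) ≤ ∑ x', p x' y) with h0 | h0
      · rw [← h0, zero_mul]
        exact le_of_lt (hu0 y)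
      · rw [mul_div_cancel₀ _ (ne_of_gt h0)]
    calc ∑ y, ∑ x, p x y * (u y / ∑ x', p x' y) ≤ ∑ y, u y :=
          Finset.sum_le_sum fun y _ => hy y
      _ = 1 := hu1
  linarith

end Aux

/-- for any `2`-design POVM on `ℂ^d`, every ensemble has
`I(ρ; π) ≤ W_2(d) = ln(2d/(d+1))`, hence `W(π) ≤ ln(2d/(d+1))`. -/
theorem infoPower_twoDesign_le
    {d m : ℕ} (hd : 1 ≤ d)
    (π : Fin m → Matrix (Fin d) (Fin d) ℂ) (hπ : IsTDesignPOVM 2 π) :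
    (∀ (n : ℕ) (ρ : Fin n → Matrix (Fin d) (Fin d) ℂ), IsEnsemble ρ →
      mutualInfo ρ π ≤ Real.log (2 * d / (d + 1)))
    ∧ infoPower π ≤ Real.log (2 * d / (d + 1)) := by
  obtain ⟨⟨hpsd, hsum⟩, hnz, hdes⟩ := hπ
  have hdes2 := hdes 2 (by norm_num) (by norm_num)
  have hdR0 : (0:ℝ) < (d:ℝ) := by exact_mod_cast Nat.pos_of_ne_zero (by omega)
  have hdR1 : (1:ℝ) ≤ (d:ℝ) := by exact_mod_cast hd
  have hC1 : (1:ℝ) ≤ 2 * d / (d + 1) := by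
    rw [le_div_iff₀ (by positivity)]
    linarith
  have part1 : ∀ (n : ℕ) (ρ : Fin n → Matrix (Fin d) (Fin d) ℂ), IsEnsemble ρ →
      mutualInfo ρ π ≤ Real.log (2 * d / (d + 1)) := by
    intro n ρ hE
    obtain ⟨hρpsd, hρ1⟩ := hE
    -- real nonnegativity and realness facts
    have hπreal : ∀ y, (π y).trace = ((((π y).trace).re : ℝ) : ℂ) := fun y =>
      nonneg_re_eq (psd_trace_nonneg' (hpsd y))
    have hα : ∀ y, 0 < ((π y).trace).re := fun y => psd_trace_re_pos (hpsd y) (hnz y)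
    have hpreal : ∀ x y, (ρ x * π y).trace = ((((ρ x * π y).trace).re : ℝ) : ℂ) := fun x y =>
      nonneg_re_eq (psd_mul_trace_nonneg (hρpsd x) (hpsd y))
    have hρreal : ∀ x, (ρ x).trace = ((((ρ x).trace).re : ℝ) : ℂ) := fun x =>
      nonneg_re_eq (psd_trace_nonneg' (hρpsd x))
    have hρ2psd : ∀ x, (ρ x * ρ x).PosSemidef := by
      intro x
      have := Matrix.posSemidef_conjTranspose_mul_self (ρ x)
      rwa [(hρpsd x).isHermitian.eq] at this
    have hρ2real : ∀ x, (ρ x * ρ x).trace = ((((ρ x * ρ x).trace).re : ℝ) : ℂ) := fun x =>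
      nonneg_re_eq (psd_trace_nonneg' (hρ2psd x))
    -- marginals
    have hpx : ∀ x, ∑ y, ((ρ x * π y).trace).re = ((ρ x).trace).re := by
      intro x
      have : ∑ y, (ρ x * π y).trace = (ρ x).trace := by
        rw [← Matrix.trace_sum, ← Matrix.mul_sum, hsum, Matrix.mul_one]
      rw [← Complex.re_sum, this]
    have hpx1 : ∑ x, ((ρ x).trace).re = 1 := by
      have := congrArg Complex.re hρ1
      rwa [Complex.re_sum, Complex.one_re] at this
    have hαsum : ∑ y, ((π y).trace).re = (d:ℝ) := by
      have : ∑ y, (π y).trace = (d : ℂ) := by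
        rw [← Matrix.trace_sum, hsum, Matrix.trace_one]
        simp
      have := congrArg Complex.re this
      rwa [Complex.re_sum, Complex.natCast_re] at this
    -- the design identity, realified
    have hkey : ∀ x, ∑ y, (((ρ x * π y).trace).re) ^ 2 / (((π y).trace).re / d)
        ≤ (2 * d / (d + 1)) * (((ρ x).trace).re) ^ 2 := by
      intro x
      have hcx := design_scalar hd hdes2 (ρ x)
      rw [hρreal x, hρ2real x] at hcx
      have hlhs : ∑ y, ((π y).trace)⁻¹ * ((ρ x * π y).trace) ^ 2
          = ((∑ y, ((((π y).trace).re)⁻¹ * (((ρ x * π y).trace).re) ^ 2) : ℝ) : ℂ) := by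
        calc ∑ y, ((π y).trace)⁻¹ * ((ρ x * π y).trace) ^ 2
            = ∑ y, (((((π y).trace).re : ℝ) : ℂ))⁻¹ * (((((ρ x * π y).trace).re : ℝ) : ℂ)) ^ 2 :=
              Finset.sum_congr rfl fun y _ => by
                conv_lhs => rw [hπreal y, hpreal x y]
          _ = ((∑ y, ((((π y).trace).re)⁻¹ * (((ρ x * π y).trace).re) ^ 2) : ℝ) : ℂ) := by
              push_cast
              rfl
      rw [hlhs] at hcx
      have hrhs : ((((((ρ x).trace).re : ℝ)) : ℂ) ^ 2 + ((((ρ x * ρ x).trace).re : ℝ) : ℂ))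
            / ((d : ℂ) + 1)
          = (((((((ρ x).trace).re) ^ 2 + (((ρ x * ρ x).trace).re) : ℝ)) / ((d:ℝ) + 1) : ℝ) : ℂ) := by
        push_cast
        ring
      rw [hrhs] at hcx
      have hreal := Complex.ofReal_inj.mp hcx
      have ht2 : (((ρ x * ρ x).trace).re) ≤ (((ρ x).trace).re) ^ 2 := trace_sq_le (hρpsd x)
      have hstep : ∑ y, (((ρ x * π y).trace).re) ^ 2 / (((π y).trace).re / d)
          = (d:ℝ) * ∑ y, ((((π y).trace).re)⁻¹ * (((ρ x * π y).trace).re) ^ 2) := by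
        rw [Finset.mul_sum]
        refine Finset.sum_congr rfl fun y _ => ?_
        rw [div_div_eq_mul_div]
        field_simp [ne_of_gt (hα y)]
      rw [hstep, hreal]
      calc (d:ℝ) * (((((ρ x).trace).re) ^ 2 + (((ρ x * ρ x).trace).re)) / ((d:ℝ) + 1))
          ≤ (d:ℝ) * (((((ρ x).trace).re) ^ 2 + (((ρ x).trace).re) ^ 2) / ((d:ℝ) + 1)) := by
            apply mul_le_mul_of_nonneg_left _ (le_of_lt hdR0)
            exact (div_le_div_iff_of_pos_right (by positivity)).mpr (by linarith)
        _ = (2 * d / (d + 1)) * (((ρ x).trace).re) ^ 2 := by ring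
    have := info_bound (fun x y => ((ρ x * π y).trace).re) (fun x => ((ρ x).trace).re)
      (fun y => ((π y).trace).re / d) (2 * d / (d + 1)) hC1
      (fun x y => (Complex.nonneg_iff.mp (psd_mul_trace_nonneg (hρpsd x) (hpsd y))).1)
      hpx hpx1
      (fun y => div_pos (hα y) hdR0)
      (by rw [← Finset.sum_div, hαsum, div_self (ne_of_gt hdR0)])
      hkey
    exact this
  refine ⟨part1, ?_⟩
  apply Real.sSup_le
  · rintro w ⟨n, ρ, hE, rfl⟩
    exact part1 n ρ hE
  · exact Real.log_nonneg hC1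
end
end

section
/- For every integer d ≥ 1, the double series ∑_{n=2}^∞ ∑_{k=0}^n ((n−2)! (−1)^k / (k! (n−k)!)) · binom(d−1+k, k)^{-1} converges, and its sum S satisfies ln d − d + 1 + d·S = ln d − ∑_{n=2}^d 1/n; equivalently, S = 1 − 1/d − (1/d) ∑_{n=2}^d 1/n. -/
open MeasureTheory Matrix Finset Filter
open scoped ComplexOrder

noncomputable section

lemma my_altsum (m : ℕ) : ∀ n, ∑ j ∈ Finset.range (n+1), (-1:ℝ)^j * ((m+1).choose j) = (-1)^n * (m.choose n) := by
  intro n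
  induction n with
  | zero => simp
  | succ n ih =>
    rw [Finset.sum_range_succ, ih, Nat.choose_succ_succ]
    push_cast
    ring

lemma my_altsum2 (M n : ℕ) :
    ∑ k ∈ Finset.range (n+1), (-1:ℝ)^k * ((M+1).choose (n-k)) = (M.choose n : ℝ) := by
  have hrefl := Finset.sum_range_reflect (fun j => (-1:ℝ)^j * ((M+1).choose j)) (n+1)
  simp only [Nat.add_sub_cancel] at hrefl
  have hsgn : ∀ k ∈ Finset.range (n+1),
      (-1:ℝ)^k * ((M+1).choose (n-k)) = (-1)^n * ((-1)^(n-k) * ((M+1).choose (n-k))) := by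
    intro k hk
    have hk' : k ≤ n := by simpa [Nat.lt_succ_iff] using hk
    have h1 : (-1:ℝ)^n = (-1)^(n-k) * (-1)^k := by
      rw [← pow_add]; congr 1; omega
    have hbb : (-1:ℝ)^(n-k) * (-1)^(n-k) = 1 := by
      rw [← pow_add, ← two_mul, pow_mul]; norm_num
    rw [h1]
    linear_combination (-((-1:ℝ)^k * (((M+1).choose (n-k) : ℝ)))) * hbb
  rw [Finset.sum_congr rfl hsgn, ← Finset.mul_sum, hrefl, my_altsum M n, ← mul_assoc,
    ← pow_add, ← two_mul, pow_mul]
  norm_num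

lemma my_inner (e m : ℕ) :
    ∑ k ∈ Finset.range (m+3),
      (Nat.factorial m : ℝ) * (-1)^k / (Nat.factorial k * Nat.factorial (m+2-k))
        * ((Nat.choose (e+k) k : ℝ))⁻¹
    = (e:ℝ) / ((m+2)*(m+1)*(m+e+2)) := by
  have key : ∀ k ∈ Finset.range (m+3),
      (Nat.factorial m : ℝ) * (-1)^k / (Nat.factorial k * Nat.factorial (m+2-k))
        * ((Nat.choose (e+k) k : ℝ))⁻¹
      = ((Nat.factorial m : ℝ) * (Nat.factorial e) / (Nat.factorial (m+e+2)))
          * ((-1:ℝ)^k * ((m+e+2).choose (m+2-k))) := by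
    intro k hk
    have hk' : k ≤ m + 2 := by simpa [Nat.lt_succ_iff] using hk
    have h1 : ((Nat.choose (e+k) k : ℝ)) = (Nat.factorial (e+k)) / (Nat.factorial k * Nat.factorial e) := by
      rw [Nat.cast_choose ℝ (Nat.le_add_left k e), Nat.add_sub_cancel]
    have h2 : (((m+e+2).choose (m+2-k)) : ℝ)
        = (Nat.factorial (m+e+2)) / (Nat.factorial (m+2-k) * Nat.factorial (e+k)) := by
      rw [Nat.cast_choose ℝ (show m+2-k ≤ m+e+2 by omega),
        show m+e+2-(m+2-k) = e+k by omega]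
    have f1 : (Nat.factorial k : ℝ) ≠ 0 := by positivity
    have f2 : (Nat.factorial (m+2-k) : ℝ) ≠ 0 := by positivity
    have f3 : (Nat.factorial e : ℝ) ≠ 0 := by positivity
    have f4 : (Nat.factorial (e+k) : ℝ) ≠ 0 := by positivity
    have f5 : (Nat.factorial (m+e+2) : ℝ) ≠ 0 := by positivity
    rw [h1, h2]
    field_simp
  rw [Finset.sum_congr rfl key, ← Finset.mul_sum]
  have h3 : ∑ k ∈ Finset.range (m+3), (-1:ℝ)^k * (((m+e+2)).choose (m+2-k)) = ((m+e+1).choose (m+2) : ℝ) := by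
    have := my_altsum2 (m+e+1) (m+2)
    convert this using 3
  rw [h3]
  rcases e with _ | f
  · rw [Nat.choose_eq_zero_of_lt (by omega)]
    simp
  · have hc : (((m+(f+1)+1).choose (m+2)) : ℝ)
        = (Nat.factorial (m+f+2)) / (Nat.factorial (m+2) * Nat.factorial f) := by
      rw [show m+(f+1)+1 = m+f+2 by ring,
        Nat.cast_choose ℝ (show m+2 ≤ m+f+2 by omega),
        show m+f+2-(m+2) = f by omega]
    have e1 : ((Nat.factorial (m+(f+1)+2)) : ℝ) = (m+f+3) * Nat.factorial (m+f+2) := by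
      rw [show m+(f+1)+2 = (m+f+2)+1 by ring, Nat.factorial_succ]
      push_cast; ring
    have e2 : ((Nat.factorial (m+2)) : ℝ) = (m+2) * ((m+1) * Nat.factorial m) := by
      rw [show m+2 = (m+1)+1 by ring, Nat.factorial_succ, Nat.factorial_succ]
      push_cast; ring
    have e3 : ((Nat.factorial (f+1)) : ℝ) = (f+1) * Nat.factorial f := by
      rw [Nat.factorial_succ]; push_cast; ring
    have f1 : (Nat.factorial m : ℝ) ≠ 0 := by positivity
    have f2 : (Nat.factorial f : ℝ) ≠ 0 := by positivity
    have f3 : (Nat.factorial (m+f+2) : ℝ) ≠ 0 := by positivity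
    rw [hc, e1, e2, e3]
    push_cast
    field_simp
    ring


/-- for every `d ≥ 1`, the double series
`∑_{n=2}^∞ ∑_{k=0}^n ((n−2)! (−1)^k / (k!(n−k)!)) binom(d−1+k, k)⁻¹` converges, and its
sum `S` satisfies `ln d − d + 1 + d·S = ln d − ∑_{n=2}^d 1/n`, equivalently
`S = 1 − 1/d − (1/d) ∑_{n=2}^d 1/n`. -/
theorem subentropy_series
    (d : ℕ) (hd : 1 ≤ d) :
    ∃ S : ℝ,
      Filter.Tendsto
        (fun N => ∑ n ∈ Finset.Icc 2 N, ∑ k ∈ Finset.range (n + 1),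
          (Nat.factorial (n - 2) : ℝ) * (-1) ^ k
              / (Nat.factorial k * Nat.factorial (n - k))
            * ((Nat.choose (d - 1 + k) k : ℝ))⁻¹)
        Filter.atTop (nhds S)
      ∧ Real.log d - d + 1 + d * S = Real.log d - ∑ n ∈ Finset.Icc 2 d, (1 : ℝ) / n
      ∧ S = 1 - 1 / d - (1 / d) * ∑ n ∈ Finset.Icc 2 d, (1 : ℝ) / n := by
  obtain ⟨e, rfl⟩ : ∃ e, d = e + 1 := ⟨d - 1, by omega⟩
  set G : ℝ := ∑ n ∈ Finset.Icc 2 (e+1), (1 : ℝ) / n with hG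
  set S : ℝ := 1 - 1/((e:ℝ)+1) - (1/((e:ℝ)+1)) * G with hS
  -- inner sums in closed form
  have hinner : ∀ n, 2 ≤ n →
      (∑ k ∈ Finset.range (n + 1),
        (Nat.factorial (n - 2) : ℝ) * (-1) ^ k
            / (Nat.factorial k * Nat.factorial (n - k))
          * ((Nat.choose (e + 1 - 1 + k) k : ℝ))⁻¹)
      = (e:ℝ) / ((n:ℝ) * ((n:ℝ)-1) * ((n:ℝ)+(e:ℝ))) := by
    intro n hn
    obtain ⟨m, rfl⟩ : ∃ m, n = m + 2 := ⟨n - 2, by omega⟩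
    have := my_inner e m
    simp only [show ∀ k, e + 1 - 1 + k = e + k from fun k => by omega,
      show m + 2 - 2 = m from rfl, show m + 2 + 1 = m + 3 from rfl] at *
    rw [this]
    push_cast
    ring_nf
  -- the sequence of partial sums, rewritten
  have hG' : G = ∑ j ∈ Finset.range e, (1:ℝ) / (2 + (j:ℝ)) := by
    rw [hG, ← Finset.Ico_add_one_right_eq_Icc, Finset.sum_Ico_eq_sum_range]
    simp only [show e + 1 + 1 - 2 = e from by omega]
    refine Finset.sum_congr rfl fun j _ => by push_cast; ring_nf
  set F : ℕ → ℝ := fun N =>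
    S - ((e:ℝ)/((e:ℝ)+1)) * (1/(N:ℝ))
      + (1/((e:ℝ)+1)) * ∑ j ∈ Finset.range e, (1:ℝ)/((N:ℝ)+1+(j:ℝ)) with hF
  have he1 : ((e:ℝ)+1) ≠ 0 := by positivity
  have hclosed : ∀ N : ℕ, 1 ≤ N →
      (∑ n ∈ Finset.Icc 2 N, (e:ℝ) / ((n:ℝ) * ((n:ℝ)-1) * ((n:ℝ)+(e:ℝ)))) = F N := by
    intro N hN
    induction N, hN using Nat.le_induction with
    | base =>
      rw [show Finset.Icc 2 1 = ∅ from rfl, Finset.sum_empty, hF]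
      simp only [Nat.cast_one]
      rw [hS, hG']
      have : ∑ j ∈ Finset.range e, (1:ℝ)/((1:ℝ)+1+(j:ℝ)) = ∑ j ∈ Finset.range e, (1:ℝ)/(2+(j:ℝ)) := by
        refine Finset.sum_congr rfl fun j _ => by norm_num
      rw [this]
      field_simp
      ring
    | succ N hN ih =>
      rw [Finset.sum_Icc_succ_top (by omega : 2 ≤ N + 1), ih]
      simp only [hF]
      have hshift : ∑ j ∈ Finset.range e, (1:ℝ)/(((N+1:ℕ):ℝ)+1+(j:ℝ))
          = (∑ j ∈ Finset.range e, (1:ℝ)/((N:ℝ)+1+(j:ℝ)))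
            + (1/((N:ℝ)+1+(e:ℝ)) - 1/((N:ℝ)+1)) := by
        have htel := Finset.sum_range_sub (fun j => (1:ℝ)/((N:ℝ)+1+(j:ℝ))) e
        have hcg : ∑ j ∈ Finset.range e, (1:ℝ)/(((N+1:ℕ):ℝ)+1+(j:ℝ))
            = ∑ j ∈ Finset.range e, (1:ℝ)/((N:ℝ)+1+((j:ℝ)+1)) := by
          refine Finset.sum_congr rfl fun j _ => by push_cast; ring_nf
        rw [hcg]
        rw [Finset.sum_sub_distrib] at htel
        push_cast at htel
        simp only [add_zero] at htel
        linarith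
      rw [hshift]
      have hN0 : (N:ℝ) ≠ 0 := Nat.cast_ne_zero.mpr (by omega)
      have hN1 : ((N:ℝ)+1) ≠ 0 := by positivity
      have hNe : ((N:ℝ)+1+(e:ℝ)) ≠ 0 := by positivity
      have hN2 : ((N:ℝ)+1) * (((N:ℝ)+1) - 1) * (((N:ℝ)+1)+(e:ℝ)) ≠ 0 := by
        have : (N:ℝ) ≥ 1 := by exact_mod_cast hN
        have h1 : ((N:ℝ)+1) - 1 = (N:ℝ) := by ring
        rw [h1]
        positivity
      push_cast
      field_simp
      linear_combination ((e:ℝ) + (e:ℝ)^2) * (mul_inv_cancel₀ hN0)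
  have l1 : Filter.Tendsto (fun N : ℕ => 1/(N:ℝ)) Filter.atTop (nhds 0) :=
    tendsto_one_div_atTop_nhds_zero_nat
  have l2 : ∀ j : ℕ, Filter.Tendsto (fun N : ℕ => (1:ℝ)/((N:ℝ)+1+(j:ℝ)))
      Filter.atTop (nhds 0) := by
    intro j
    have h : Filter.Tendsto (fun N : ℕ => ((N:ℝ)+1+(j:ℝ))) Filter.atTop Filter.atTop :=
      Filter.tendsto_atTop_add_const_right _ _
        (Filter.tendsto_atTop_add_const_right _ _ tendsto_natCast_atTop_atTop)
    simpa [one_div, Pi.inv_def] using h.inv_tendsto_atTop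
  have l3 : Filter.Tendsto (fun N : ℕ => ∑ j ∈ Finset.range e, (1:ℝ)/((N:ℝ)+1+(j:ℝ)))
      Filter.atTop (nhds 0) := by
    have := tendsto_finset_sum (Finset.range e) (fun j (_ : j ∈ Finset.range e) => l2 j)
    simpa using this
  have l4 : Filter.Tendsto F Filter.atTop (nhds S) := by
    have h : Filter.Tendsto F Filter.atTop
        (nhds (S - ((e:ℝ)/((e:ℝ)+1))*0 + (1/((e:ℝ)+1))*0)) := by
      simp only [hF]
      exact (tendsto_const_nhds.sub (tendsto_const_nhds.mul l1)).add (tendsto_const_nhds.mul l3)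
    simpa using h
  refine ⟨S, ?_, ?_, ?_⟩
  · refine Filter.Tendsto.congr' ?_ l4
    filter_upwards [Filter.eventually_ge_atTop 1] with N hN
    rw [← hclosed N hN]
    exact (Finset.sum_congr rfl fun n hn => hinner n (Finset.mem_Icc.mp hn).1).symm
  · rw [hS]
    push_cast
    field_simp
    ring
  · rw [hS]
    push_cast
    ring
end
end

section
/- The informational power of the 2-dimensional tetrahedral (SIC) POVM (π_y)_{y=1}^4 equals ln(4/3): the supremum over all ensembles (ρ_x) of the mutual information I(ρ; π) equals ln(4/3), and it is attained by the anti-tetrahedral ensemble ρ_x = (1/8)(I − s_x·σ), x = 1,…,4, which satisfies ρ_x π_x = 0 for every x. -/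
open MeasureTheory Matrix Finset Filter
open scoped ComplexOrder

noncomputable section

/-- The Pauli matrices. -/
def pauliX : Matrix (Fin 2) (Fin 2) ℂ := !![0, 1; 1, 0]
def pauliY : Matrix (Fin 2) (Fin 2) ℂ := !![0, -Complex.I; Complex.I, 0]
def pauliZ : Matrix (Fin 2) (Fin 2) ℂ := !![1, 0; 0, -1]

/-- `s·σ = s₁σ₁ + s₂σ₂ + s₃σ₃` for `s ∈ ℝ³`. -/
def dotPauli (s : Fin 3 → ℝ) : Matrix (Fin 2) (Fin 2) ℂ :=
  (s 0 : ℂ) • pauliX + (s 1 : ℂ) • pauliY + (s 2 : ℂ) • pauliZ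
/-- Bloch vectors of the tetrahedral (SIC) POVM. -/
def tetraVec : Fin 4 → Fin 3 → ℝ := fun y i =>
  (![![1, 1, 1], ![1, -1, -1], ![-1, 1, -1], ![-1, -1, 1]] : Fin 4 → Fin 3 → ℝ) y i
    / Real.sqrt 3

/-- The 2-dimensional tetrahedral (SIC) POVM `π_y = (1/4)(I + s_y·σ)`. -/
def tetraPOVM : Fin 4 → Matrix (Fin 2) (Fin 2) ℂ :=
  fun y => (1 / 4 : ℂ) • (1 + dotPauli (tetraVec y))
/-- The anti-tetrahedral ensemble `ρ_x = (1/8)(I − s_x·σ)`. -/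
def antiTetra : Fin 4 → Matrix (Fin 2) (Fin 2) ℂ :=
  fun x => (1 / 8 : ℂ) • (1 - dotPauli (tetraVec x))

/-! ### Auxiliary lemmas -/

section Aux

lemma tv00 : tetraVec 0 0 = 1/Real.sqrt 3 := rfl
lemma tv01 : tetraVec 0 1 = 1/Real.sqrt 3 := rfl
lemma tv02 : tetraVec 0 2 = 1/Real.sqrt 3 := rfl
lemma tv10 : tetraVec 1 0 = 1/Real.sqrt 3 := rfl
lemma tv11 : tetraVec 1 1 = -(1/Real.sqrt 3) := by show (-1:ℝ)/Real.sqrt 3 = _; rw [neg_div]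
lemma tv12 : tetraVec 1 2 = -(1/Real.sqrt 3) := by show (-1:ℝ)/Real.sqrt 3 = _; rw [neg_div]
lemma tv20 : tetraVec 2 0 = -(1/Real.sqrt 3) := by show (-1:ℝ)/Real.sqrt 3 = _; rw [neg_div]
lemma tv21 : tetraVec 2 1 = 1/Real.sqrt 3 := rfl
lemma tv22 : tetraVec 2 2 = -(1/Real.sqrt 3) := by show (-1:ℝ)/Real.sqrt 3 = _; rw [neg_div]
lemma tv30 : tetraVec 3 0 = -(1/Real.sqrt 3) := by show (-1:ℝ)/Real.sqrt 3 = _; rw [neg_div]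
lemma tv31 : tetraVec 3 1 = -(1/Real.sqrt 3) := by show (-1:ℝ)/Real.sqrt 3 = _; rw [neg_div]
lemma tv32 : tetraVec 3 2 = 1/Real.sqrt 3 := rfl

lemma sqrt3_pos : (0:ℝ) < Real.sqrt 3 := Real.sqrt_pos.mpr (by norm_num)
lemma sqrt3_mul : Real.sqrt 3 * Real.sqrt 3 = 3 := Real.mul_self_sqrt (by norm_num)
lemma S_sq : (1/Real.sqrt 3) * (1/Real.sqrt 3) = 1/3 := by
  rw [div_mul_div_comm, sqrt3_mul]; norm_num
lemma S_sqC : ((1/Real.sqrt 3 : ℝ) : ℂ) * ((1/Real.sqrt 3 : ℝ) : ℂ) = 1/3 := by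
  rw [← Complex.ofReal_mul, S_sq]; norm_num

/-- The abstract probability function for a state with parameters `a b u v`. -/
def Pf (a b u v : ℝ) (y : Fin 4) : ℝ :=
  (1/4) * ((a+b) + tetraVec y 0 * (2*u) + tetraVec y 1 * (-2*v) + tetraVec y 2 * (a-b))

lemma sumP (a b u v : ℝ) : ∑ y, Pf a b u v y = a + b := by
  simp only [Fin.sum_univ_four, Pf, tv00, tv01, tv02, tv10, tv11, tv12, tv20, tv21, tv22,
    tv30, tv31, tv32]
  ring

lemma sumP2 (a b u v : ℝ) (h : u^2 + v^2 ≤ a*b) :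
    ∑ y, (Pf a b u v y)^2 ≤ (a+b)^2/3 := by
  have key : ∑ y, (Pf a b u v y)^2
      = (a+b)^2/4 + (4*u^2 + 4*v^2 + (a-b)^2)/12 := by
    simp only [Fin.sum_univ_four, Pf, tv00, tv01, tv02, tv10, tv11, tv12, tv20, tv21, tv22,
      tv30, tv31, tv32]
    linear_combination ((4*u^2 + 4*v^2 + (a-b)^2)/4) * S_sq
  rw [key]
  nlinarith [h]

lemma aux_nonneg (c d : ℝ) (hc : 0 ≤ c) (hd : d^2 ≤ 3*c^2) :
    0 ≤ c + (1/Real.sqrt 3) * d := by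
  have hp := sqrt3_pos
  have hs := sqrt3_mul
  by_contra hlt
  push_neg at hlt
  have h1 : Real.sqrt 3 * c + d < 0 := by
    have := mul_lt_mul_of_pos_left hlt hp
    rw [mul_zero] at this
    calc Real.sqrt 3 * c + d = Real.sqrt 3 * (c + 1/Real.sqrt 3 * d) := by
          field_simp
      _ < 0 := this
  nlinarith [sq_nonneg (Real.sqrt 3 * c - d), mul_nonneg hc (le_of_lt hp)]

lemma Pnonneg (a b u v : ℝ) (ha : 0 ≤ a) (hb : 0 ≤ b) (h : u^2 + v^2 ≤ a*b) (y : Fin 4) :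
    0 ≤ Pf a b u v y := by
  have hab : 0 ≤ a + b := by linarith
  fin_cases y
  · have hd : (2*u + (-2*v) + (a-b))^2 ≤ 3*(a+b)^2 := by
      nlinarith [sq_nonneg (2*u+2*v), sq_nonneg (2*u-(a-b)), sq_nonneg (2*v+(a-b))]
    have := aux_nonneg (a+b) (2*u + (-2*v) + (a-b)) hab hd
    show (0:ℝ) ≤ Pf a b u v 0
    simp only [Pf, tv00, tv01, tv02]
    nlinarith [this]
  · have hd : (2*u + 2*v + (b-a))^2 ≤ 3*(a+b)^2 := by
      nlinarith [sq_nonneg (2*u-2*v), sq_nonneg (2*u-(b-a)), sq_nonneg (2*v-(b-a))]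
    have := aux_nonneg (a+b) (2*u + 2*v + (b-a)) hab hd
    show (0:ℝ) ≤ Pf a b u v 1
    simp only [Pf, tv10, tv11, tv12]
    nlinarith [this]
  · have hd : (-(2*u) + (-2*v) + (b-a))^2 ≤ 3*(a+b)^2 := by
      nlinarith [sq_nonneg (2*u-2*v), sq_nonneg (2*u-(b-a)), sq_nonneg (2*v+(b-a))]
    have := aux_nonneg (a+b) (-(2*u) + (-2*v) + (b-a)) hab hd
    show (0:ℝ) ≤ Pf a b u v 2
    simp only [Pf, tv20, tv21, tv22]
    nlinarith [this]
  · have hd : (-(2*u) + 2*v + (a-b))^2 ≤ 3*(a+b)^2 := by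
      nlinarith [sq_nonneg (2*u+2*v), sq_nonneg (2*u+(a-b)), sq_nonneg (2*v-(a-b))]
    have := aux_nonneg (a+b) (-(2*u) + 2*v + (a-b)) hab hd
    show (0:ℝ) ≤ Pf a b u v 3
    simp only [Pf, tv30, tv31, tv32]
    nlinarith [this]

/-! ### Matrix computations -/

lemma dotPauli_eq (s : Fin 3 → ℝ) :
    dotPauli s = !![(s 2 : ℂ), (s 0:ℂ) - (s 1:ℂ)*Complex.I;
                    (s 0:ℂ) + (s 1:ℂ)*Complex.I, -(s 2:ℂ)] := by
  ext i j
  fin_cases i <;> fin_cases j <;>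
    (simp [dotPauli, pauliX, pauliY, pauliZ]; try ring)

lemma tetraPOVM_eq (y : Fin 4) :
    tetraPOVM y = (1/4 : ℂ) •
      !![1 + (tetraVec y 2 : ℂ), (tetraVec y 0:ℂ) - (tetraVec y 1:ℂ)*Complex.I;
         (tetraVec y 0:ℂ) + (tetraVec y 1:ℂ)*Complex.I, 1 - (tetraVec y 2:ℂ)] := by
  rw [show tetraPOVM y = (1/4 : ℂ) • (1 + dotPauli (tetraVec y)) from rfl,
    dotPauli_eq, Matrix.one_fin_two]
  congr 1
  ext i j
  fin_cases i <;> fin_cases j <;> (simp; try ring)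

lemma trace_mul_tetra (ρ : Matrix (Fin 2) (Fin 2) ℂ) (y : Fin 4) :
    (ρ * tetraPOVM y).trace = (1/4) * ((ρ 0 0 + ρ 1 1)
      + (tetraVec y 0 : ℂ) * (ρ 0 1 + ρ 1 0)
      + (tetraVec y 1 : ℂ) * Complex.I * (ρ 0 1 - ρ 1 0)
      + (tetraVec y 2 : ℂ) * (ρ 0 0 - ρ 1 1)) := by
  rw [tetraPOVM_eq]
  simp [Matrix.trace_fin_two, Matrix.mul_apply, Fin.sum_univ_two]
  ring

lemma trace_mul_tetra_re (ρ : Matrix (Fin 2) (Fin 2) ℂ) (hH : ρ.IsHermitian) (y : Fin 4) :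
    ((ρ * tetraPOVM y).trace).re
      = Pf (ρ 0 0).re (ρ 1 1).re (ρ 0 1).re (ρ 0 1).im y := by
  have h10 : ρ 1 0 = starRingEnd ℂ (ρ 0 1) := (hH.apply 1 0).symm
  rw [trace_mul_tetra, h10, Pf]
  simp [Complex.add_re, Complex.mul_re, Complex.mul_im, Complex.add_im, Complex.sub_re,
    Complex.sub_im, Complex.ofReal_re, Complex.ofReal_im, Complex.conj_re, Complex.conj_im]
  ring

/-! ### PSD facts -/

lemma psd_diag_re0 (ρ : Matrix (Fin 2) (Fin 2) ℂ) (hρ : ρ.PosSemidef) :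
    0 ≤ (ρ 0 0).re := by
  have h := hρ.dotProduct_mulVec_nonneg ![1, 0]
  have hval : star ![(1:ℂ), 0] ⬝ᵥ ρ *ᵥ ![1, 0] = ρ 0 0 := by
    simp [dotProduct, Matrix.mulVec, Fin.sum_univ_two]
  rw [hval] at h
  exact (Complex.le_def.mp h).1

lemma psd_diag_re1 (ρ : Matrix (Fin 2) (Fin 2) ℂ) (hρ : ρ.PosSemidef) :
    0 ≤ (ρ 1 1).re := by
  have h := hρ.dotProduct_mulVec_nonneg ![0, 1]
  have hval : star ![(0:ℂ), 1] ⬝ᵥ ρ *ᵥ ![0, 1] = ρ 1 1 := by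
    simp [dotProduct, Matrix.mulVec, Fin.sum_univ_two]
  rw [hval] at h
  exact (Complex.le_def.mp h).1

lemma psd_diag_im (ρ : Matrix (Fin 2) (Fin 2) ℂ) (hρ : ρ.PosSemidef) (i : Fin 2) :
    (ρ i i).im = 0 := Complex.conj_eq_iff_im.mp (hρ.1.apply i i)

lemma herm_off (ρ : Matrix (Fin 2) (Fin 2) ℂ) (hρ : ρ.PosSemidef) :
    ρ 1 0 = starRingEnd ℂ (ρ 0 1) := (hρ.1.apply 1 0).symm

lemma psd_key (ρ : Matrix (Fin 2) (Fin 2) ℂ) (hρ : ρ.PosSemidef) :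
    (ρ 0 1).re^2 + (ρ 0 1).im^2 ≤ (ρ 0 0).re * (ρ 1 1).re := by
  set a := (ρ 0 0).re with ha
  set b := (ρ 1 1).re with hb
  set c := ρ 0 1 with hc
  set k := c.re^2 + c.im^2 with hk
  have hkn : 0 ≤ k := by positivity
  have h00 : ρ 0 0 = (a : ℂ) := Complex.ext (by simp [ha]) (by simp [psd_diag_im ρ hρ 0])
  have h11 : ρ 1 1 = (b : ℂ) := Complex.ext (by simp [hb]) (by simp [psd_diag_im ρ hρ 1])
  have h10 : ρ 1 0 = starRingEnd ℂ c := herm_off ρ hρ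
  have hq : ∀ t : ℝ, 0 ≤ a*k*(t*t) + (-(2*k))*t + b := by
    intro t
    have h0 := hρ.dotProduct_mulVec_nonneg ![-(t:ℂ) * c, 1]
    have hval : star ![-(t:ℂ) * c, 1] ⬝ᵥ ρ *ᵥ ![-(t:ℂ) * c, 1]
        = ((a*k*(t*t) + (-(2*k))*t + b : ℝ) : ℂ) := by
      simp only [dotProduct, Matrix.mulVec, Fin.sum_univ_two, Pi.star_apply,
        Matrix.cons_val_zero, Matrix.cons_val_one, Matrix.head_cons, h00, h11, h10]
      rw [Complex.ext_iff]
      constructor <;>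
        simp [Complex.add_re, Complex.mul_re, Complex.mul_im, Complex.conj_re,
          Complex.conj_im, Complex.ofReal_re, Complex.ofReal_im, ← Complex.ofReal_pow, hk] <;>
        ring
    rw [hval] at h0
    exact_mod_cast (Complex.le_def.mp h0).1
  have hd := discrim_le_zero hq
  rw [discrim] at hd
  have ha0 := psd_diag_re0 ρ hρ
  have hb0 := psd_diag_re1 ρ hρ
  rcases eq_or_lt_of_le hkn with h0 | hpos
  · rw [← h0]; exact mul_nonneg ha0 hb0
  · nlinarith [hd, hpos]

/-! ### Analytic inequalities -/

lemma pt_bound (w p : ℝ) (hw : 0 ≤ w) (hp : 0 < p) :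
    w * Real.log (4 * w / p) ≤ w * Real.log (4/3) + 3/p*w^2 - w := by
  rcases eq_or_lt_of_le hw with h0 | hpos
  · simp [← h0]
  · have h1 : Real.log (3*w/p) ≤ 3*w/p - 1 :=
      Real.log_le_sub_one_of_pos (by positivity)
    have h2 : Real.log (4*w/p) = Real.log (4/3) + Real.log (3*w/p) := by
      rw [← Real.log_mul (by norm_num) (by positivity)]
      congr 1
      field_simp
    rw [h2]
    have := mul_le_mul_of_nonneg_left h1 hw
    calc w * (Real.log (4/3) + Real.log (3*w/p))
        = w * Real.log (4/3) + w * Real.log (3*w/p) := by ring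
      _ ≤ w * Real.log (4/3) + w * (3*w/p - 1) := by linarith
      _ = w * Real.log (4/3) + 3/p*w^2 - w := by field_simp; ring

lemma key1 (P : Fin 4 → ℝ) (p : ℝ) (hP : ∀ y, 0 ≤ P y) (hsum : ∑ y, P y = p)
    (hsq : ∑ y, (P y)^2 ≤ p^2/3) :
    ∑ y, P y * Real.log (4 * P y / p) ≤ p * Real.log (4/3) := by
  rcases eq_or_lt_of_le (le_of_le_of_eq (Finset.sum_nonneg fun y _ => hP y) hsum) with h0 | hp
  · have hall : ∀ y, P y = 0 := by
      intro y
      have := Finset.sum_eq_zero_iff_of_nonneg (fun y _ => hP y) |>.mp (hsum.trans h0.symm)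
      exact this y (Finset.mem_univ y)
    simp [hall, ← h0]
  · have hb : ∀ y ∈ Finset.univ, P y * Real.log (4 * P y / p)
        ≤ P y * Real.log (4/3) + 3/p*(P y)^2 - P y := fun y _ => pt_bound (P y) p (hP y) hp
    have h3 : 3/p * (∑ y, (P y)^2) ≤ 3/p * (p^2/3) :=
      mul_le_mul_of_nonneg_left hsq (by positivity)
    calc ∑ y, P y * Real.log (4 * P y / p)
        ≤ ∑ y, (P y * Real.log (4/3) + 3/p*(P y)^2 - P y) := Finset.sum_le_sum hb
      _ = (∑ y, P y) * Real.log (4/3) + 3/p * (∑ y, (P y)^2) - ∑ y, P y := by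
          rw [Finset.sum_sub_distrib, Finset.sum_add_distrib, ← Finset.sum_mul,
            ← Finset.mul_sum]
      _ ≤ p * Real.log (4/3) + 3/p * (p^2/3) - p := by rw [hsum]; linarith
      _ = p * Real.log (4/3) := by field_simp; ring

lemma key2 (q : Fin 4 → ℝ) (hq : ∀ y, 0 ≤ q y) (hsum : ∑ y, q y = 1) :
    0 ≤ ∑ y, q y * Real.log (4 * q y) := by
  have hb : ∀ y ∈ Finset.univ, q y - 1/4 ≤ q y * Real.log (4 * q y) := by
    intro y _
    rcases eq_or_lt_of_le (hq y) with h0 | hpos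
    · rw [← h0]; norm_num
    · have h1 : Real.log (1/(4 * q y)) ≤ 1/(4 * q y) - 1 :=
        Real.log_le_sub_one_of_pos (by positivity)
      have h2 : Real.log (4 * q y) = - Real.log (1/(4*q y)) := by
        rw [one_div, Real.log_inv]; ring
      rw [h2]
      have := mul_le_mul_of_nonneg_left h1 (hq y)
      have hne : q y ≠ 0 := ne_of_gt hpos
      calc q y - 1/4 = -(q y * (1/(4 * q y) - 1)) := by field_simp; ring
        _ ≤ -(q y * Real.log (1/(4 * q y))) := by linarith
        _ = q y * -Real.log (1/(4 * q y)) := by ring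
  calc (0:ℝ) = ∑ y : Fin 4, (q y - 1/4) := by rw [Finset.sum_sub_distrib, hsum]; simp
    _ ≤ _ := Finset.sum_le_sum hb

end Aux

/-! ### The upper bound for arbitrary ensembles -/

lemma mutualInfo_le (n : ℕ) (ρ : Fin n → Matrix (Fin 2) (Fin 2) ℂ) (hρ : IsEnsemble ρ) :
    mutualInfo ρ tetraPOVM ≤ Real.log (4/3) := by
  set P : Fin n → Fin 4 → ℝ := fun x y => ((ρ x * tetraPOVM y).trace).re with hPdef
  set pr : Fin n → ℝ := fun x => ((ρ x).trace).re with hprdef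
  have hPf : ∀ x y, P x y = Pf ((ρ x) 0 0).re ((ρ x) 1 1).re ((ρ x) 0 1).re ((ρ x) 0 1).im y :=
    fun x y => trace_mul_tetra_re (ρ x) (hρ.1 x).1 y
  have hkey : ∀ x, ((ρ x) 0 1).re^2 + ((ρ x) 0 1).im^2 ≤ ((ρ x) 0 0).re * ((ρ x) 1 1).re :=
    fun x => psd_key (ρ x) (hρ.1 x)
  have ha0 : ∀ x, 0 ≤ ((ρ x) 0 0).re := fun x => psd_diag_re0 (ρ x) (hρ.1 x)
  have hb0 : ∀ x, 0 ≤ ((ρ x) 1 1).re := fun x => psd_diag_re1 (ρ x) (hρ.1 x)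
  have hprtr : ∀ x, pr x = ((ρ x) 0 0).re + ((ρ x) 1 1).re := by
    intro x
    rw [hprdef]
    simp [Matrix.trace_fin_two, Complex.add_re]
  have hPpos : ∀ x y, 0 ≤ P x y := by
    intro x y
    rw [hPf]
    exact Pnonneg _ _ _ _ (ha0 x) (hb0 x) (hkey x) y
  have hProw : ∀ x, ∑ y, P x y = pr x := by
    intro x
    rw [hprtr]
    simp only [hPf]
    exact sumP _ _ _ _
  have hPsq : ∀ x, ∑ y, (P x y)^2 ≤ (pr x)^2/3 := by
    intro x
    rw [hprtr]
    simp only [hPf]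
    exact sumP2 _ _ _ _ (hkey x)
  have hprnn : ∀ x, 0 ≤ pr x := by
    intro x
    rw [hprtr]; exact add_nonneg (ha0 x) (hb0 x)
  have hprsum : ∑ x, pr x = 1 := by
    have := hρ.2
    have : (∑ x, (ρ x).trace).re = (1:ℂ).re := by rw [this]
    rw [Complex.re_sum] at this
    simpa using this
  set q : Fin 4 → ℝ := fun y => ∑ x', P x' y with hqdef
  have hqnn : ∀ y, 0 ≤ q y := fun y => Finset.sum_nonneg fun x _ => hPpos x y
  have hqsum : ∑ y, q y = 1 := by
    rw [hqdef]
    rw [Finset.sum_comm]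
    simp only [hProw]
    exact hprsum
  have hqP : ∀ x y, P x y ≤ q y := by
    intro x y
    exact Finset.single_le_sum (fun x' _ => hPpos x' y) (Finset.mem_univ x)
  have hpP : ∀ x y, P x y ≤ pr x := by
    intro x y
    rw [← hProw x]
    exact Finset.single_le_sum (fun y' _ => hPpos x y') (Finset.mem_univ y)
  -- decomposition
  have hdecomp : ∀ x y, P x y * Real.log (P x y / (pr x * q y))
      = P x y * Real.log (4 * P x y / pr x) - P x y * Real.log (4 * q y) := by
    intro x y
    rcases eq_or_lt_of_le (hPpos x y) with h0 | hpos
    · rw [← h0]; simp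
    · have hpx : 0 < pr x := lt_of_lt_of_le hpos (hpP x y)
      have hqy : 0 < q y := lt_of_lt_of_le hpos (hqP x y)
      rw [Real.log_div (ne_of_gt hpos) (ne_of_gt (mul_pos hpx hqy)),
        Real.log_mul (ne_of_gt hpx) (ne_of_gt hqy),
        Real.log_div (ne_of_gt (by linarith : (0:ℝ) < 4 * P x y)) (ne_of_gt hpx),
        Real.log_mul (by norm_num) (ne_of_gt hpos),
        Real.log_mul (by norm_num) (ne_of_gt hqy)]
      ring
  have hMI : mutualInfo ρ tetraPOVM
      = (∑ x, ∑ y, P x y * Real.log (4 * P x y / pr x)) - ∑ y, q y * Real.log (4 * q y) := by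
    rw [mutualInfo]
    have : ∀ x ∈ Finset.univ, ∀ y ∈ Finset.univ,
        P x y * Real.log (P x y / (pr x * q y))
        = P x y * Real.log (4 * P x y / pr x) - P x y * Real.log (4 * q y) :=
      fun x _ y _ => hdecomp x y
    calc ∑ x, ∑ y, P x y * Real.log (P x y / (pr x * q y))
        = ∑ x, ∑ y, (P x y * Real.log (4 * P x y / pr x) - P x y * Real.log (4 * q y)) := by
          exact Finset.sum_congr rfl fun x _ => Finset.sum_congr rfl fun y _ => hdecomp x y
      _ = (∑ x, ∑ y, P x y * Real.log (4 * P x y / pr x))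
            - ∑ x, ∑ y, P x y * Real.log (4 * q y) := by
          rw [← Finset.sum_sub_distrib]
          exact Finset.sum_congr rfl fun x _ => Finset.sum_sub_distrib _ _
      _ = _ := by
          congr 1
          rw [Finset.sum_comm]
          exact Finset.sum_congr rfl fun y _ => by rw [← Finset.sum_mul]
  rw [hMI]
  have h1 : ∑ x, ∑ y, P x y * Real.log (4 * P x y / pr x) ≤ Real.log (4/3) := by
    calc ∑ x, ∑ y, P x y * Real.log (4 * P x y / pr x)
        ≤ ∑ x, pr x * Real.log (4/3) := Finset.sum_le_sum fun x _ =>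
            key1 (P x) (pr x) (hPpos x) (hProw x) (hPsq x)
      _ = Real.log (4/3) := by rw [← Finset.sum_mul, hprsum, one_mul]
  have h2 := key2 q hqnn hqsum
  linarith

/-! ### Facts about the anti-tetrahedral ensemble -/

lemma tetra_dot (x y : Fin 4) :
    tetraVec x 0 * tetraVec y 0 + tetraVec x 1 * tetraVec y 1 + tetraVec x 2 * tetraVec y 2
      = if x = y then 1 else -1/3 := by
  fin_cases x <;> fin_cases y
  · show tetraVec 0 0 * tetraVec 0 0 + tetraVec 0 1 * tetraVec 0 1
        + tetraVec 0 2 * tetraVec 0 2 = if (0 : Fin 4) = 0 then 1 else -1/3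
    rw [if_pos rfl]
    simp only [tv00, tv01, tv02, tv10, tv11, tv12, tv20, tv21, tv22, tv30, tv31, tv32]
    linear_combination (3 : ℝ) * S_sq
  · show tetraVec 0 0 * tetraVec 1 0 + tetraVec 0 1 * tetraVec 1 1
        + tetraVec 0 2 * tetraVec 1 2 = if (0 : Fin 4) = 1 then 1 else -1/3
    rw [if_neg (by decide)]
    simp only [tv00, tv01, tv02, tv10, tv11, tv12, tv20, tv21, tv22, tv30, tv31, tv32]
    linear_combination (-1 : ℝ) * S_sq
  · show tetraVec 0 0 * tetraVec 2 0 + tetraVec 0 1 * tetraVec 2 1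
        + tetraVec 0 2 * tetraVec 2 2 = if (0 : Fin 4) = 2 then 1 else -1/3
    rw [if_neg (by decide)]
    simp only [tv00, tv01, tv02, tv10, tv11, tv12, tv20, tv21, tv22, tv30, tv31, tv32]
    linear_combination (-1 : ℝ) * S_sq
  · show tetraVec 0 0 * tetraVec 3 0 + tetraVec 0 1 * tetraVec 3 1
        + tetraVec 0 2 * tetraVec 3 2 = if (0 : Fin 4) = 3 then 1 else -1/3
    rw [if_neg (by decide)]
    simp only [tv00, tv01, tv02, tv10, tv11, tv12, tv20, tv21, tv22, tv30, tv31, tv32]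
    linear_combination (-1 : ℝ) * S_sq
  · show tetraVec 1 0 * tetraVec 0 0 + tetraVec 1 1 * tetraVec 0 1
        + tetraVec 1 2 * tetraVec 0 2 = if (1 : Fin 4) = 0 then 1 else -1/3
    rw [if_neg (by decide)]
    simp only [tv00, tv01, tv02, tv10, tv11, tv12, tv20, tv21, tv22, tv30, tv31, tv32]
    linear_combination (-1 : ℝ) * S_sq
  · show tetraVec 1 0 * tetraVec 1 0 + tetraVec 1 1 * tetraVec 1 1
        + tetraVec 1 2 * tetraVec 1 2 = if (1 : Fin 4) = 1 then 1 else -1/3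
    rw [if_pos rfl]
    simp only [tv00, tv01, tv02, tv10, tv11, tv12, tv20, tv21, tv22, tv30, tv31, tv32]
    linear_combination (3 : ℝ) * S_sq
  · show tetraVec 1 0 * tetraVec 2 0 + tetraVec 1 1 * tetraVec 2 1
        + tetraVec 1 2 * tetraVec 2 2 = if (1 : Fin 4) = 2 then 1 else -1/3
    rw [if_neg (by decide)]
    simp only [tv00, tv01, tv02, tv10, tv11, tv12, tv20, tv21, tv22, tv30, tv31, tv32]
    linear_combination (-1 : ℝ) * S_sq
  · show tetraVec 1 0 * tetraVec 3 0 + tetraVec 1 1 * tetraVec 3 1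
        + tetraVec 1 2 * tetraVec 3 2 = if (1 : Fin 4) = 3 then 1 else -1/3
    rw [if_neg (by decide)]
    simp only [tv00, tv01, tv02, tv10, tv11, tv12, tv20, tv21, tv22, tv30, tv31, tv32]
    linear_combination (-1 : ℝ) * S_sq
  · show tetraVec 2 0 * tetraVec 0 0 + tetraVec 2 1 * tetraVec 0 1
        + tetraVec 2 2 * tetraVec 0 2 = if (2 : Fin 4) = 0 then 1 else -1/3
    rw [if_neg (by decide)]
    simp only [tv00, tv01, tv02, tv10, tv11, tv12, tv20, tv21, tv22, tv30, tv31, tv32]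
    linear_combination (-1 : ℝ) * S_sq
  · show tetraVec 2 0 * tetraVec 1 0 + tetraVec 2 1 * tetraVec 1 1
        + tetraVec 2 2 * tetraVec 1 2 = if (2 : Fin 4) = 1 then 1 else -1/3
    rw [if_neg (by decide)]
    simp only [tv00, tv01, tv02, tv10, tv11, tv12, tv20, tv21, tv22, tv30, tv31, tv32]
    linear_combination (-1 : ℝ) * S_sq
  · show tetraVec 2 0 * tetraVec 2 0 + tetraVec 2 1 * tetraVec 2 1
        + tetraVec 2 2 * tetraVec 2 2 = if (2 : Fin 4) = 2 then 1 else -1/3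
    rw [if_pos rfl]
    simp only [tv00, tv01, tv02, tv10, tv11, tv12, tv20, tv21, tv22, tv30, tv31, tv32]
    linear_combination (3 : ℝ) * S_sq
  · show tetraVec 2 0 * tetraVec 3 0 + tetraVec 2 1 * tetraVec 3 1
        + tetraVec 2 2 * tetraVec 3 2 = if (2 : Fin 4) = 3 then 1 else -1/3
    rw [if_neg (by decide)]
    simp only [tv00, tv01, tv02, tv10, tv11, tv12, tv20, tv21, tv22, tv30, tv31, tv32]
    linear_combination (-1 : ℝ) * S_sq
  · show tetraVec 3 0 * tetraVec 0 0 + tetraVec 3 1 * tetraVec 0 1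
        + tetraVec 3 2 * tetraVec 0 2 = if (3 : Fin 4) = 0 then 1 else -1/3
    rw [if_neg (by decide)]
    simp only [tv00, tv01, tv02, tv10, tv11, tv12, tv20, tv21, tv22, tv30, tv31, tv32]
    linear_combination (-1 : ℝ) * S_sq
  · show tetraVec 3 0 * tetraVec 1 0 + tetraVec 3 1 * tetraVec 1 1
        + tetraVec 3 2 * tetraVec 1 2 = if (3 : Fin 4) = 1 then 1 else -1/3
    rw [if_neg (by decide)]
    simp only [tv00, tv01, tv02, tv10, tv11, tv12, tv20, tv21, tv22, tv30, tv31, tv32]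
    linear_combination (-1 : ℝ) * S_sq
  · show tetraVec 3 0 * tetraVec 2 0 + tetraVec 3 1 * tetraVec 2 1
        + tetraVec 3 2 * tetraVec 2 2 = if (3 : Fin 4) = 2 then 1 else -1/3
    rw [if_neg (by decide)]
    simp only [tv00, tv01, tv02, tv10, tv11, tv12, tv20, tv21, tv22, tv30, tv31, tv32]
    linear_combination (-1 : ℝ) * S_sq
  · show tetraVec 3 0 * tetraVec 3 0 + tetraVec 3 1 * tetraVec 3 1
        + tetraVec 3 2 * tetraVec 3 2 = if (3 : Fin 4) = 3 then 1 else -1/3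
    rw [if_pos rfl]
    simp only [tv00, tv01, tv02, tv10, tv11, tv12, tv20, tv21, tv22, tv30, tv31, tv32]
    linear_combination (3 : ℝ) * S_sq

lemma trace_dotPauli (s : Fin 3 → ℝ) : (dotPauli s).trace = 0 := by
  rw [dotPauli_eq, Matrix.trace_fin_two]
  simp

lemma trace_dotPauli_mul (s t : Fin 3 → ℝ) :
    (dotPauli s * dotPauli t).trace
      = 2 * ((s 0 * t 0 + s 1 * t 1 + s 2 * t 2 : ℝ) : ℂ) := by
  rw [dotPauli_eq s, dotPauli_eq t, Matrix.trace_fin_two]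
  simp [Matrix.mul_apply, Fin.sum_univ_two]
  push_cast
  linear_combination (-2 * (s 1 : ℂ) * (t 1 : ℂ)) * Complex.I_sq

lemma trace_two : (1 : Matrix (Fin 2) (Fin 2) ℂ).trace = 2 := by
  rw [Matrix.trace_one]
  norm_num

lemma anti_trace_mul (x y : Fin 4) :
    (antiTetra x * tetraPOVM y).trace = if x = y then 0 else (1/12 : ℂ) := by
  show ((1 / 8 : ℂ) • (1 - dotPauli (tetraVec x)) * ((1 / 4 : ℂ) • (1 + dotPauli (tetraVec y)))).trace = _
  rw [Matrix.smul_mul, Matrix.mul_smul, smul_smul, Matrix.trace_smul]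
  have hexp : (1 - dotPauli (tetraVec x)) * (1 + dotPauli (tetraVec y))
      = 1 + dotPauli (tetraVec y) - dotPauli (tetraVec x)
        - dotPauli (tetraVec x) * dotPauli (tetraVec y) := by noncomm_ring
  rw [hexp, Matrix.trace_sub, Matrix.trace_sub, Matrix.trace_add, trace_two,
    trace_dotPauli, trace_dotPauli, trace_dotPauli_mul]
  have hd := tetra_dot x y
  by_cases hxy : x = y
  · rw [if_pos hxy] at hd ⊢
    rw [hd, smul_eq_mul]
    push_cast
    ring
  · rw [if_neg hxy] at hd ⊢
    rw [hd, smul_eq_mul]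
    push_cast
    ring

lemma dotPauli_herm (x : Fin 4) : (dotPauli (tetraVec x))ᴴ = dotPauli (tetraVec x) := by
  rw [dotPauli_eq]
  ext i j
  fin_cases i <;> fin_cases j <;>
    simp [Matrix.conjTranspose_apply, Complex.ext_iff]

lemma dotPauli_sq (x : Fin 4) :
    dotPauli (tetraVec x) * dotPauli (tetraVec x) = 1 := by
  have hn : tetraVec x 0 * tetraVec x 0 + tetraVec x 1 * tetraVec x 1
      + tetraVec x 2 * tetraVec x 2 = 1 := by
    have := tetra_dot x x
    rwa [if_pos rfl] at this
  have hnC : (tetraVec x 0 : ℂ) * (tetraVec x 0 : ℂ) + (tetraVec x 1 : ℂ) * (tetraVec x 1 : ℂ)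
      + (tetraVec x 2 : ℂ) * (tetraVec x 2 : ℂ) = 1 := by
    have : ((tetraVec x 0 * tetraVec x 0 + tetraVec x 1 * tetraVec x 1
        + tetraVec x 2 * tetraVec x 2 : ℝ) : ℂ) = 1 := by rw [hn]; norm_num
    push_cast at this
    exact this
  rw [dotPauli_eq]
  ext i j
  fin_cases i <;> fin_cases j <;>
    (simp [Matrix.mul_apply, Fin.sum_univ_two, Matrix.one_apply]
     try first
       | linear_combination hnC - (tetraVec x 1 : ℂ) * (tetraVec x 1 : ℂ) * Complex.I_sq
       | linear_combination hnC + (tetraVec x 1 : ℂ) * (tetraVec x 1 : ℂ) * Complex.I_sq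
       | ring)

lemma antiTetra_psd (x : Fin 4) : (antiTetra x).PosSemidef := by
  have hA := dotPauli_sq x
  have hH := dotPauli_herm x
  set A := dotPauli (tetraVec x) with hAdef
  have hform : antiTetra x = ((1/4 : ℂ) • (1 - A))ᴴ * ((1/4 : ℂ) • (1 - A)) := by
    have hBH : ((1/4 : ℂ) • (1 - A))ᴴ = (1/4 : ℂ) • (1 - A) := by
      rw [Matrix.conjTranspose_smul, Matrix.conjTranspose_sub, Matrix.conjTranspose_one, hH]
      norm_num
    rw [hBH, Matrix.smul_mul, Matrix.mul_smul, smul_smul]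
    have h2 : (1 - A) * (1 - A) = (2:ℂ) • (1 - A) := by
      have expand : (1 - A) * (1 - A) = 1 - A - A + A * A := by noncomm_ring
      rw [expand, hA]
      ext i j
      simp only [Matrix.smul_apply, Matrix.sub_apply, Matrix.add_apply, Matrix.one_apply,
        smul_eq_mul]
      by_cases hij : i = j <;> simp [hij] <;> ring
    rw [h2, smul_smul]
    show antiTetra x = ((1:ℂ)/4 * (1/4) * 2) • (1 - A)
    norm_num
    rfl
  rw [hform]
  exact Matrix.posSemidef_conjTranspose_mul_self _

lemma antiTetra_mul_tetraPOVM_self (x : Fin 4) : antiTetra x * tetraPOVM x = 0 := by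
  have hA := dotPauli_sq x
  set A := dotPauli (tetraVec x) with hAdef
  show ((1 / 8 : ℂ) • (1 - A)) * ((1 / 4 : ℂ) • (1 + A)) = 0
  rw [Matrix.smul_mul, Matrix.mul_smul, smul_smul]
  have h1 : (1 - A) * (1 + A) = 1 - A * A := by noncomm_ring
  rw [h1, hA, sub_self, smul_zero]

lemma antiTetra_trace (x : Fin 4) : (antiTetra x).trace = 1/4 := by
  show ((1 / 8 : ℂ) • (1 - dotPauli (tetraVec x))).trace = 1/4
  rw [Matrix.trace_smul, Matrix.trace_sub, trace_two, trace_dotPauli]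
  norm_num

lemma antiTetra_isEnsemble : IsEnsemble antiTetra := by
  refine ⟨antiTetra_psd, ?_⟩
  rw [Fin.sum_univ_four, antiTetra_trace, antiTetra_trace, antiTetra_trace, antiTetra_trace]
  norm_num

lemma antiTetra_P (x y : Fin 4) :
    ((antiTetra x * tetraPOVM y).trace).re = if x = y then 0 else 1/12 := by
  rw [anti_trace_mul]
  by_cases hxy : x = y <;> simp [hxy]

lemma sum_ite_row (c : ℝ) (x : Fin 4) :
    ∑ y, (if x = y then (0:ℝ) else c) = 3*c := by
  have hfun : ∀ y : Fin 4, (if x = y then (0:ℝ) else c) = c - (if x = y then c else 0) := by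
    intro y; split <;> ring
  simp only [hfun]
  rw [Finset.sum_sub_distrib, Finset.sum_const, Finset.sum_ite_eq]
  simp
  ring

lemma sum_ite_col (c : ℝ) (y : Fin 4) :
    ∑ x', (if x' = y then (0:ℝ) else c) = 3*c := by
  have hfun : ∀ x' : Fin 4, (if x' = y then (0:ℝ) else c) = c - (if x' = y then c else 0) := by
    intro x'; split <;> ring
  simp only [hfun]
  rw [Finset.sum_sub_distrib, Finset.sum_const, Finset.sum_ite_eq']
  simp
  ring

lemma antiTetra_mutualInfo : mutualInfo antiTetra tetraPOVM = Real.log (4/3) := by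
  rw [mutualInfo]
  have htr : ∀ x : Fin 4, ((antiTetra x).trace).re = 1/4 := by
    intro x
    rw [antiTetra_trace]
    norm_num
  have hq : ∀ y : Fin 4, (∑ x' : Fin 4, ((antiTetra x' * tetraPOVM y).trace).re) = 1/4 := by
    intro y
    simp only [antiTetra_P]
    rw [sum_ite_col]
    norm_num
  calc ∑ x : Fin 4, ∑ y : Fin 4, ((antiTetra x * tetraPOVM y).trace).re *
        Real.log (((antiTetra x * tetraPOVM y).trace).re /
          (((antiTetra x).trace).re * ∑ x' : Fin 4, ((antiTetra x' * tetraPOVM y).trace).re))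
      = ∑ x : Fin 4, ∑ y : Fin 4, (if x = y then 0 else
          (1/12) * Real.log ((1/12) / ((1/4) * (1/4)))) := by
        refine Finset.sum_congr rfl fun x _ => Finset.sum_congr rfl fun y _ => ?_
        rw [antiTetra_P, htr, hq]
        by_cases hxy : x = y
        · simp [hxy]
        · simp [hxy]
    _ = Real.log (4/3) := by
        rw [show ((1:ℝ)/12) / ((1/4) * (1/4)) = 4/3 by norm_num]
        simp only [sum_ite_row, Finset.sum_const]
        simp
        ring

/-- the informational power of the tetrahedral (SIC) POVM equals
`ln(4/3)`, attained by the anti-tetrahedral ensemble, which satisfies `ρ_x π_x = 0`. -/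
theorem tetra_infoPower :
    infoPower tetraPOVM = Real.log (4 / 3)
    ∧ IsEnsemble antiTetra
    ∧ mutualInfo antiTetra tetraPOVM = Real.log (4 / 3)
    ∧ ∀ x, antiTetra x * tetraPOVM x = 0 := by
  refine ⟨?_, antiTetra_isEnsemble, antiTetra_mutualInfo, antiTetra_mul_tetraPOVM_self⟩
  rw [infoPower]
  apply le_antisymm
  · apply Real.sSup_le
    · rintro w ⟨n, ρ, hens, rfl⟩
      exact mutualInfo_le n ρ hens
    · exact Real.log_nonneg (by norm_num)
  · apply le_csSup
    · refine ⟨Real.log (4/3), ?_⟩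
      rintro w ⟨n, ρ, hens, rfl⟩
      exact mutualInfo_le n ρ hens
    · exact ⟨4, antiTetra, antiTetra_isEnsemble, antiTetra_mutualInfo.symm⟩
end
end
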